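/- arXiv:1508.06899 — 4 statements merged into one kernel-verified Lean document; each statement's English description precedes it below -/
import Mathlib

section
/- Bisimulation equivalence is a congruence with respect to the operators of ctBPAps: for all closed ctBPAps process terms p,q,p′,q′ and every proposition φ, if p ↔ q and p′ ↔ q′ then p+p′ ↔ q+q′, p·p′ ↔ q·q′, φ:→p ↔ φ:→q, and φ⌃p ↔ φ⌃q. -/
set_option autoImplicit true
set_option maxHeartbeats 1000000

/-- The three truth values of LP→⊥: true, false, both. -/
inductive V3 : Type
  | t
  | f
  | b
  deriving DecidableEq

/-- Formulas of LP→⊥ over propositional variables of type `α`. -/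
inductive Fml (α : Type) : Type
  | var : α → Fml α
  | bot : Fml α
  | neg : Fml α → Fml α
  | conj : Fml α → Fml α → Fml α
  | disj : Fml α → Fml α → Fml α
  | imp : Fml α → Fml α → Fml α

namespace Fml

/-- ⊤ abbreviates ¬⊥. -/
def top {α : Type} : Fml α := neg bot

/-- A↔B abbreviates (A→B)∧(B→A). -/
def iff' {α : Type} (A B : Fml α) : Fml α := conj (imp A B) (imp B A)

end Fml

/-- LP→⊥ truth table for negation. -/
def negT : V3 → V3
  | .f => .t
  | .t => .f
  | .b => .b

/-- LP→⊥ truth table for conjunction. -/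
def conjT : V3 → V3 → V3
  | .f, _ => .f
  | _, .f => .f
  | .t, .t => .t
  | _, _ => .b

/-- LP→⊥ truth table for disjunction. -/
def disjT : V3 → V3 → V3
  | .t, _ => .t
  | _, .t => .t
  | .f, .f => .f
  | _, _ => .b

/-- LP→⊥ truth table for implication. -/
def impT : V3 → V3 → V3
  | .f, _ => .t
  | _, y => y

/-- The LP→⊥ valuation determined by an assignment `σ` of truth values to variables. -/
def eval {α : Type} (σ : α → V3) : Fml α → V3
  | .var x => σ x
  | .bot => .f
  | .neg A => negT (eval σ A)
  | .conj A B => conjT (eval σ A) (eval σ B)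
  | .disj A B => disjT (eval σ A) (eval σ B)
  | .imp A B => impT (eval σ A) (eval σ B)

/-- Logical equivalence in LP→⊥: the same value under every valuation. -/
def FEquiv {α : Type} (A B : Fml α) : Prop := ∀ σ : α → V3, eval σ A = eval σ B

/-- `φ ∈ [⊥]`: `φ` is logically equivalent to ⊥. -/
def EqBot {α : Type} (φ : Fml α) : Prop := ∀ σ : α → V3, eval σ φ = V3.f

/-- Semantic consequence in LP→⊥ (designated values t and b). -/
def SemCons {α : Type} (Γ : Set (Fml α)) (A : Fml α) : Prop :=
  ∀ σ : α → V3, (∀ C ∈ Γ, eval σ C ≠ V3.f) → eval σ A ≠ V3.f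

/-- The Hilbert system of LP→⊥, with hypotheses `Γ`. -/
inductive Hilb {α : Type} (Γ : Set (Fml α)) : Fml α → Prop
  | hyp {A : Fml α} : A ∈ Γ → Hilb Γ A
  | mp {A B : Fml α} : Hilb Γ (A.imp B) → Hilb Γ A → Hilb Γ B
  | ax1 (A B : Fml α) : Hilb Γ (A.imp (B.imp A))
  | ax2 (A B C : Fml α) : Hilb Γ ((A.imp (B.imp C)).imp ((A.imp B).imp (A.imp C)))
  | ax3 (A B : Fml α) : Hilb Γ (((A.imp B).imp A).imp A)
  | ax4 (A : Fml α) : Hilb Γ (Fml.bot.imp A)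
  | ax5 (A B : Fml α) : Hilb Γ ((A.conj B).imp A)
  | ax6 (A B : Fml α) : Hilb Γ ((A.conj B).imp B)
  | ax7 (A B : Fml α) : Hilb Γ (A.imp (B.imp (A.conj B)))
  | ax8 (A B : Fml α) : Hilb Γ (A.imp (A.disj B))
  | ax9 (A B : Fml α) : Hilb Γ (B.imp (A.disj B))
  | ax10 (A B C : Fml α) : Hilb Γ ((A.imp C).imp ((B.imp C).imp ((A.disj B).imp C)))
  | ax11 (A : Fml α) : Hilb Γ (Fml.iff' A.neg.neg A)
  | ax12 (A B : Fml α) : Hilb Γ (Fml.iff' (A.imp B).neg (A.conj B.neg))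
  | ax13 (A B : Fml α) : Hilb Γ (Fml.iff' (A.conj B).neg (A.neg.disj B.neg))
  | ax14 (A B : Fml α) : Hilb Γ (Fml.iff' (A.disj B).neg (A.neg.conj B.neg))
  | ax15 (A : Fml α) : Hilb Γ (A.disj A.neg)

/-- The internalization (A↔B)∧(¬A↔¬B) of logical equivalence. -/
def InternEq {α : Type} (φ ψ : Fml α) : Fml α :=
  (Fml.iff' φ ψ).conj (Fml.iff' φ.neg ψ.neg)

/-- Derivable equality of propositions: the least congruence containing the
instances of axiom IMP (φ = ψ whenever ⊢ (φ↔ψ)∧(¬φ↔¬ψ)). -/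
inductive PropEq {α : Type} : Fml α → Fml α → Prop
  | imp {φ ψ} : Hilb (∅ : Set (Fml α)) (InternEq φ ψ) → PropEq φ ψ
  | refl (φ) : PropEq φ φ
  | symm {φ ψ} : PropEq φ ψ → PropEq ψ φ
  | trans {φ ψ χ} : PropEq φ ψ → PropEq ψ χ → PropEq φ χ
  | negC {φ ψ} : PropEq φ ψ → PropEq φ.neg ψ.neg
  | conjC {φ ψ φ' ψ'} : PropEq φ ψ → PropEq φ' ψ' → PropEq (φ.conj φ') (ψ.conj ψ')
  | disjC {φ ψ φ' ψ'} : PropEq φ ψ → PropEq φ' ψ' → PropEq (φ.disj φ') (ψ.disj ψ')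
  | impC {φ ψ φ' ψ'} : PropEq φ ψ → PropEq φ' ψ' → PropEq (φ.imp φ') (ψ.imp ψ')

/-- Closed ctBPAps process terms over atomic propositions `α` and actions `Act`
(δ is the separate constructor `delta`, ⊗ is `nex`, `gc` is the guarded command
φ:→p and `se` is the signal emission φ⌃p). -/
inductive PT (α Act : Type) : Type
  | act : Act → PT α Act
  | delta : PT α Act
  | nex : PT α Act
  | alt : PT α Act → PT α Act → PT α Act
  | seq : PT α Act → PT α Act → PT α Act
  | gc : Fml α → PT α Act → PT α Act
  | se : Fml α → PT α Act → PT α Act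

section
variable {α Act : Type}

/-- Derivable equality from the axioms of ctBPAps: the least congruence
satisfying A1-A7, NE1-NE3, GC1-GC7, SE1-SE8 and IMP. -/
inductive Deriv : PT α Act → PT α Act → Prop
  | refl (p : PT α Act) : Deriv p p
  | symm {p q} : Deriv p q → Deriv q p
  | trans {p q r} : Deriv p q → Deriv q r → Deriv p r
  | altC {p q p' q'} : Deriv p q → Deriv p' q' → Deriv (.alt p p') (.alt q q')
  | seqC {p q p' q'} : Deriv p q → Deriv p' q' → Deriv (.seq p p') (.seq q q')
  | gcC {φ ψ p q} : PropEq φ ψ → Deriv p q → Deriv (.gc φ p) (.gc ψ q)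
  | seC {φ ψ p q} : PropEq φ ψ → Deriv p q → Deriv (.se φ p) (.se ψ q)
  | A1 (x y : PT α Act) : Deriv (.alt x y) (.alt y x)
  | A2 (x y z : PT α Act) : Deriv (.alt (.alt x y) z) (.alt x (.alt y z))
  | A3 (x : PT α Act) : Deriv (.alt x x) x
  | A4 (x y z : PT α Act) : Deriv (.seq (.alt x y) z) (.alt (.seq x z) (.seq y z))
  | A5 (x y z : PT α Act) : Deriv (.seq (.seq x y) z) (.seq x (.seq y z))
  | A6 (x : PT α Act) : Deriv (.alt x .delta) x
  | A7 (x : PT α Act) : Deriv (.seq .delta x) .delta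
  | NE1 (x : PT α Act) : Deriv (.alt x .nex) .nex
  | NE2 (x : PT α Act) : Deriv (.seq .nex x) .nex
  | NE3 (a : Act) : Deriv (.seq (.act a) .nex) .delta
  | NE3d : Deriv (.seq (.delta : PT α Act) .nex) .delta
  | GC1 (x : PT α Act) : Deriv (.gc Fml.top x) x
  | GC2 (x : PT α Act) : Deriv (.gc .bot x) .delta
  | GC3 (φ : Fml α) : Deriv (.gc φ .delta) (.delta : PT α Act)
  | GC4 (φ : Fml α) (x y : PT α Act) :
      Deriv (.gc φ (.alt x y)) (.alt (.gc φ x) (.gc φ y))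
  | GC5 (φ : Fml α) (x y : PT α Act) : Deriv (.gc φ (.seq x y)) (.seq (.gc φ x) y)
  | GC6 (φ ψ : Fml α) (x : PT α Act) : Deriv (.gc φ (.gc ψ x)) (.gc (φ.conj ψ) x)
  | GC7 (φ ψ : Fml α) (x : PT α Act) :
      Deriv (.gc (φ.disj ψ) x) (.alt (.gc φ x) (.gc ψ x))
  | SE1 (x : PT α Act) : Deriv (.se Fml.top x) x
  | SE2 (x : PT α Act) : Deriv (.se .bot x) .nex
  | SE3 (φ : Fml α) : Deriv (.se φ .nex) (.nex : PT α Act)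
  | SE4 (φ : Fml α) (x y : PT α Act) : Deriv (.alt (.se φ x) y) (.se φ (.alt x y))
  | SE5 (φ : Fml α) (x y : PT α Act) : Deriv (.seq (.se φ x) y) (.se φ (.seq x y))
  | SE6 (φ ψ : Fml α) (x : PT α Act) : Deriv (.se φ (.se ψ x)) (.se (φ.conj ψ) x)
  | SE7 (φ : Fml α) (x : PT α Act) : Deriv (.se φ (.gc φ x)) (.se φ x)
  | SE8 (φ ψ : Fml α) (x : PT α Act) :
      Deriv (.gc φ (.se ψ x)) (.se (φ.imp ψ) (.gc φ x))

/-- Basic terms of ctBPAps. -/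
inductive Basic : PT α Act → Prop
  | nex : Basic (.nex : PT α Act)
  | emiDelta {φ : Fml α} : ¬ EqBot φ → Basic (.se φ .delta)
  | gcAct {φ : Fml α} (a : Act) : ¬ EqBot φ → Basic (.gc φ (.act a))
  | gcSeq {φ : Fml α} (a : Act) {p : PT α Act} :
      ¬ EqBot φ → Basic p → Basic (.gc φ (.seq (.act a) p))
  | alt {p q : PT α Act} : Basic p → Basic q → Basic (.alt p q)

/-- The signal (root signal) emitted by a process term. -/
def sig : PT α Act → Fml α
  | .act _ => Fml.top
  | .delta => Fml.top
  | .nex => .bot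
  | .alt p q => (sig p).conj (sig q)
  | .seq p _ => sig p
  | .gc φ p => φ.imp (sig p)
  | .se φ p => φ.conj (sig p)

/-- The structural operational semantics of ctBPAps: `Tr p φ a (some q)` is the
action step p –φ,a→ q and `Tr p φ a none` is the action termination p –φ,a→ √. -/
inductive Tr : PT α Act → Fml α → Act → Option (PT α Act) → Prop
  | act (a : Act) : Tr (.act a) Fml.top a none
  | altL {x φ a o} (y : PT α Act) :
      Tr x φ a o → ¬ EqBot (sig (PT.alt x y)) → Tr (.alt x y) φ a o
  | altR {y φ a o} (x : PT α Act) :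
      Tr y φ a o → ¬ EqBot (sig (PT.alt x y)) → Tr (.alt x y) φ a o
  | seqT {x φ a} (y : PT α Act) :
      Tr x φ a none → ¬ EqBot (sig y) → Tr (.seq x y) φ a (some y)
  | seqS {x φ a x'} (y : PT α Act) :
      Tr x φ a (some x') → Tr (.seq x y) φ a (some (.seq x' y))
  | gcR {x φ a o} (ψ : Fml α) :
      Tr x φ a o → ¬ EqBot (φ.conj ψ) → Tr (.gc ψ x) (φ.conj ψ) a o
  | seR {x φ a o} (ψ : Fml α) :
      Tr x φ a o → ¬ EqBot (sig (PT.se ψ x)) → Tr (.se ψ x) φ a o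

/-- Lift a relation on process terms to their optional (√-extended) targets. -/
def OptR (R : PT α Act → PT α Act → Prop) : Option (PT α Act) → Option (PT α Act) → Prop
  | none, none => True
  | some p, some q => R p q
  | _, _ => False

/-- The (one-directional) simulation conditions of a splitting bisimulation. -/
def Sim (R : PT α Act → PT α Act → Prop) (p q : PT α Act) : Prop :=
  (∀ φ a o, Tr p φ a o →
    ∀ σ : α → V3, eval σ (sig p) ≠ V3.f → eval σ φ ≠ V3.f →
      ∃ ψ o', eval σ ψ = eval σ φ ∧ Tr q ψ a o' ∧ OptR R o o') ∧
  FEquiv (sig p) (sig q)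

/-- `R` is a bisimulation. -/
def IsBisim (R : PT α Act → PT α Act → Prop) : Prop :=
  ∀ p q, R p q → Sim R p q ∧ Sim (fun u v => R v u) q p

/-- Bisimulation equivalence. -/
def Bisim (p q : PT α Act) : Prop := ∃ R, IsBisim R ∧ R p q

end

section Aux
variable {α Act : Type}

lemma conjT_ne_f {x y : V3} : conjT x y ≠ V3.f ↔ x ≠ V3.f ∧ y ≠ V3.f := by
  cases x <;> cases y <;> simp [conjT]

lemma impT_eval {x y : V3} (h : x ≠ V3.f) : impT x y = y := by
  cases x <;> first | exact absurd rfl h | rfl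

lemma optR_mono {R R' : PT α Act → PT α Act → Prop}
    (h : ∀ a b, R a b → R' a b) {o o'} (ho : OptR R o o') : OptR R' o o' := by
  cases o <;> cases o' <;> simp [OptR] at ho ⊢ <;> exact h _ _ ho

lemma sim_mono {R R' : PT α Act → PT α Act → Prop}
    (h : ∀ a b, R a b → R' a b) {p q : PT α Act}
    (hs : Sim R p q) : Sim R' p q := by
  refine ⟨?_, hs.2⟩
  intro χ a o htr σ h1 h2
  obtain ⟨ψ, o', he, ht, hr⟩ := hs.1 χ a o htr σ h1 h2
  exact ⟨ψ, o', he, ht, optR_mono h hr⟩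

lemma sim_alt {S : PT α Act → PT α Act → Prop} {p q p' q' : PT α Act}
    (h1 : Sim S p q) (h2 : Sim S p' q') : Sim S (.alt p p') (.alt q q') := by
  constructor
  · intro χ a o htr σ hsig hχ
    have hq : eval σ (sig (PT.alt q q')) = eval σ (sig (PT.alt p p')) := by
      simp [sig, eval, h1.2 σ, h2.2 σ]
    obtain ⟨hp1, hp2⟩ := conjT_ne_f.mp (by simpa [sig, eval] using hsig)
    cases htr with
    | altL _ ht hne =>
      obtain ⟨ψ, o', he, htq, hr⟩ := h1.1 χ a o ht σ hp1 hχ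
      exact ⟨ψ, o', he, Tr.altL _ htq (fun hEB => hsig (hq.symm.trans (hEB σ))), hr⟩
    | altR _ ht hne =>
      obtain ⟨ψ, o', he, htq, hr⟩ := h2.1 χ a o ht σ hp2 hχ
      exact ⟨ψ, o', he, Tr.altR _ htq (fun hEB => hsig (hq.symm.trans (hEB σ))), hr⟩
  · intro σ; simp [sig, eval, h1.2 σ, h2.2 σ]

lemma sim_seq {S T : PT α Act → PT α Act → Prop} {p q p' q' : PT α Act}
    (h1 : Sim S p q) (hT : T p' q') (hsig : FEquiv (sig p') (sig q'))
    (hST : ∀ u v, S u v → T (.seq u p') (.seq v q')) :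
    Sim T (.seq p p') (.seq q q') := by
  constructor
  · intro χ a o htr σ hs hχ
    have hs' : eval σ (sig p) ≠ V3.f := hs
    cases htr with
    | seqT _ ht hne =>
      obtain ⟨ψ, o', he, htq, hr⟩ := h1.1 χ a none ht σ hs' hχ
      cases o' with
      | some v => exact absurd hr (by simp [OptR])
      | none =>
        refine ⟨ψ, some q', he, Tr.seqT _ htq ?_, hT⟩
        intro hEB; exact hne (fun τ => (hsig τ).trans (hEB τ))
    | seqS _w ht =>
      rename_i x'
      obtain ⟨ψ, o', he, htq, hr⟩ := h1.1 χ a (some x') ht σ hs' hχ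
      cases o' with
      | none => exact absurd hr (by simp [OptR])
      | some v' =>
        exact ⟨ψ, some (.seq v' q'), he, Tr.seqS _ htq, hST _ _ hr⟩
  · intro σ; simpa [sig] using h1.2 σ

lemma sim_gc {S : PT α Act → PT α Act → Prop} {p q : PT α Act} (φ : Fml α)
    (h1 : Sim S p q) : Sim S (.gc φ p) (.gc φ q) := by
  constructor
  · intro χ a o htr σ hs hχ
    cases htr with
    | gcR _w ht hne =>
      rename_i χ₀
      obtain ⟨hχ0, hφ⟩ := conjT_ne_f.mp (by simpa [eval] using hχ)
      have hsp : eval σ (sig p) ≠ V3.f := by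
        have hh : eval σ (sig (PT.gc φ p)) = eval σ (sig p) := by
          simp [sig, eval, impT_eval hφ]
        rw [hh] at hs; exact hs
      obtain ⟨ψ, o', he, htq, hr⟩ := h1.1 _ a o ht σ hsp hχ0
      refine ⟨ψ.conj φ, o', ?_, Tr.gcR _ htq ?_, hr⟩
      · simp [eval, he]
      · intro hEB
        have hc := hEB σ
        simp [eval] at hc
        rw [he] at hc
        have hχ' : conjT (eval σ χ₀) (eval σ φ) ≠ V3.f := by simpa [eval] using hχ
        exact hχ' hc
  · intro σ; simp [sig, eval, h1.2 σ]

lemma sim_se {S : PT α Act → PT α Act → Prop} {p q : PT α Act} (φ : Fml α)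
    (h1 : Sim S p q) : Sim S (.se φ p) (.se φ q) := by
  constructor
  · intro χ a o htr σ hs hχ
    cases htr with
    | seR _ ht hne =>
      have hq : eval σ (sig (PT.se φ q)) = eval σ (sig (PT.se φ p)) := by
        simp [sig, eval, h1.2 σ]
      have hsp : eval σ (sig p) ≠ V3.f :=
        (conjT_ne_f.mp (by simpa [sig, eval] using hs)).2
      obtain ⟨ψ, o', he, htq, hr⟩ := h1.1 _ a o ht σ hsp hχ
      exact ⟨ψ, o', he, Tr.seR _ htq (fun hEB => hs (hq.symm.trans (hEB σ))), hr⟩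
  · intro σ; simp [sig, eval, h1.2 σ]

end Aux

/-- Bisimulation equivalence is a congruence for the operators of ctBPAps. -/
theorem ctBPAps_congruence {α Act : Type} [Fintype α] [Fintype Act]
    (p q p' q' : PT α Act) (φ : Fml α)
    (h : Bisim p q) (h' : Bisim p' q') :
    Bisim (.alt p p') (.alt q q') ∧ Bisim (.seq p p') (.seq q q') ∧
    Bisim (.gc φ p) (.gc φ q) ∧ Bisim (.se φ p) (.se φ q) := by
  obtain ⟨R1, hb1, hr1⟩ := h
  obtain ⟨R2, hb2, hr2⟩ := h'
  refine ⟨?_, ?_, ?_, ?_⟩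
  · refine ⟨fun u v => (u = .alt p p' ∧ v = .alt q q') ∨ R1 u v ∨ R2 u v,
      ?_, Or.inl ⟨rfl, rfl⟩⟩
    intro u v huv
    rcases huv with ⟨rfl, rfl⟩ | h1 | h2
    · exact ⟨sim_alt (sim_mono (fun a b hb => Or.inr (Or.inl hb)) (hb1 p q hr1).1)
                     (sim_mono (fun a b hb => Or.inr (Or.inr hb)) (hb2 p' q' hr2).1),
             sim_alt (sim_mono (fun a b hb => Or.inr (Or.inl hb)) (hb1 p q hr1).2)
                     (sim_mono (fun a b hb => Or.inr (Or.inr hb)) (hb2 p' q' hr2).2)⟩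
    · exact ⟨sim_mono (fun a b hb => Or.inr (Or.inl hb)) (hb1 u v h1).1,
             sim_mono (fun a b hb => Or.inr (Or.inl hb)) (hb1 u v h1).2⟩
    · exact ⟨sim_mono (fun a b hb => Or.inr (Or.inr hb)) (hb2 u v h2).1,
             sim_mono (fun a b hb => Or.inr (Or.inr hb)) (hb2 u v h2).2⟩
  · refine ⟨fun u v => (∃ u1 v1, R1 u1 v1 ∧ u = .seq u1 p' ∧ v = .seq v1 q') ∨ R2 u v,
      ?_, Or.inl ⟨p, q, hr1, rfl, rfl⟩⟩
    intro u v huv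
    rcases huv with ⟨u1, v1, h1, rfl, rfl⟩ | h2
    · refine ⟨sim_seq (hb1 u1 v1 h1).1 (Or.inr hr2) (hb2 p' q' hr2).1.2
          (fun a b hb => Or.inl ⟨a, b, hb, rfl, rfl⟩),
        sim_seq (hb1 u1 v1 h1).2 (Or.inr hr2)
          (fun σ => ((hb2 p' q' hr2).1.2 σ).symm)
          (fun a b hb => Or.inl ⟨b, a, hb, rfl, rfl⟩)⟩
    · exact ⟨sim_mono (fun a b hb => Or.inr hb) (hb2 u v h2).1,
             sim_mono (fun a b hb => Or.inr hb) (hb2 u v h2).2⟩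
  · refine ⟨fun u v => (u = .gc φ p ∧ v = .gc φ q) ∨ R1 u v, ?_, Or.inl ⟨rfl, rfl⟩⟩
    intro u v huv
    rcases huv with ⟨rfl, rfl⟩ | h1
    · exact ⟨sim_gc φ (sim_mono (fun a b hb => Or.inr hb) (hb1 p q hr1).1),
             sim_gc φ (sim_mono (fun a b hb => Or.inr hb) (hb1 p q hr1).2)⟩
    · exact ⟨sim_mono (fun a b hb => Or.inr hb) (hb1 u v h1).1,
             sim_mono (fun a b hb => Or.inr hb) (hb1 u v h1).2⟩
  · refine ⟨fun u v => (u = .se φ p ∧ v = .se φ q) ∨ R1 u v, ?_, Or.inl ⟨rfl, rfl⟩⟩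
    intro u v huv
    rcases huv with ⟨rfl, rfl⟩ | h1
    · exact ⟨sim_se φ (sim_mono (fun a b hb => Or.inr hb) (hb1 p q hr1).1),
             sim_se φ (sim_mono (fun a b hb => Or.inr hb) (hb1 p q hr1).2)⟩
    · exact ⟨sim_mono (fun a b hb => Or.inr hb) (hb1 u v h1).1,
             sim_mono (fun a b hb => Or.inr hb) (hb1 u v h1).2⟩
end

section
/- Completeness of ctBPAps: for all closed ctBPAps process terms p and q, if p ↔ q (p and q are bisimulation equivalent) then the equation p = q is derivable from the axioms of ctBPAps. -/
set_option autoImplicit true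
set_option maxHeartbeats 1000000

/- ===================== AUX: Part 1, Hilbert completeness ===================== -/
section Part1
variable {α : Type}

open Fml

namespace Hilb

theorem wk {Γ Γ' : Set (Fml α)} {A : Fml α} (hs : Γ ⊆ Γ') (h : Hilb Γ A) : Hilb Γ' A := by
  induction h with
  | hyp h => exact .hyp (hs h)
  | mp _ _ ih1 ih2 => exact .mp ih1 ih2
  | ax1 A B => exact .ax1 A B
  | ax2 A B C => exact .ax2 A B C
  | ax3 A B => exact .ax3 A B
  | ax4 A => exact .ax4 A
  | ax5 A B => exact .ax5 A B
  | ax6 A B => exact .ax6 A B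
  | ax7 A B => exact .ax7 A B
  | ax8 A B => exact .ax8 A B
  | ax9 A B => exact .ax9 A B
  | ax10 A B C => exact .ax10 A B C
  | ax11 A => exact .ax11 A
  | ax12 A B => exact .ax12 A B
  | ax13 A B => exact .ax13 A B
  | ax14 A B => exact .ax14 A B
  | ax15 A => exact .ax15 A

theorem impId {Γ : Set (Fml α)} (A : Fml α) : Hilb Γ (A.imp A) :=
  .mp (.mp (.ax2 A (A.imp A) A) (.ax1 A (A.imp A))) (.ax1 A A)

theorem ded {Γ : Set (Fml α)} {A B : Fml α} (h : Hilb (insert A Γ) B) : Hilb Γ (A.imp B) := by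
  induction h with
  | hyp h =>
    rcases Set.mem_insert_iff.mp h with rfl | h
    · exact impId _
    · exact .mp (.ax1 _ _) (.hyp h)
  | mp _ _ ih1 ih2 => exact .mp (.mp (.ax2 _ _ _) ih1) ih2
  | ax1 P Q => exact .mp (.ax1 _ _) (.ax1 P Q)
  | ax2 P Q R => exact .mp (.ax1 _ _) (.ax2 P Q R)
  | ax3 P Q => exact .mp (.ax1 _ _) (.ax3 P Q)
  | ax4 P => exact .mp (.ax1 _ _) (.ax4 P)
  | ax5 P Q => exact .mp (.ax1 _ _) (.ax5 P Q)
  | ax6 P Q => exact .mp (.ax1 _ _) (.ax6 P Q)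
  | ax7 P Q => exact .mp (.ax1 _ _) (.ax7 P Q)
  | ax8 P Q => exact .mp (.ax1 _ _) (.ax8 P Q)
  | ax9 P Q => exact .mp (.ax1 _ _) (.ax9 P Q)
  | ax10 P Q R => exact .mp (.ax1 _ _) (.ax10 P Q R)
  | ax11 P => exact .mp (.ax1 _ _) (.ax11 P)
  | ax12 P Q => exact .mp (.ax1 _ _) (.ax12 P Q)
  | ax13 P Q => exact .mp (.ax1 _ _) (.ax13 P Q)
  | ax14 P Q => exact .mp (.ax1 _ _) (.ax14 P Q)
  | ax15 P => exact .mp (.ax1 _ _) (.ax15 P)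

theorem hyp0 {Γ : Set (Fml α)} {A : Fml α} : Hilb (insert A Γ) A :=
  .hyp (Set.mem_insert _ _)

theorem hyp1 {Γ : Set (Fml α)} {A B : Fml α} : Hilb (insert B (insert A Γ)) A :=
  .hyp (Set.mem_insert_of_mem _ (Set.mem_insert _ _))

theorem wk1 {Γ : Set (Fml α)} {A B : Fml α} (h : Hilb Γ B) : Hilb (insert A Γ) B :=
  wk (Set.subset_insert _ _) h

theorem conjI {Γ : Set (Fml α)} {A B : Fml α} (h1 : Hilb Γ A) (h2 : Hilb Γ B) :
    Hilb Γ (A.conj B) := .mp (.mp (.ax7 A B) h1) h2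

theorem conjE1 {Γ : Set (Fml α)} {A B : Fml α} (h : Hilb Γ (A.conj B)) : Hilb Γ A :=
  .mp (.ax5 A B) h

theorem conjE2 {Γ : Set (Fml α)} {A B : Fml α} (h : Hilb Γ (A.conj B)) : Hilb Γ B :=
  .mp (.ax6 A B) h

theorem comp {Γ : Set (Fml α)} {A B C : Fml α} (h1 : Hilb Γ (A.imp B)) (h2 : Hilb Γ (B.imp C)) :
    Hilb Γ (A.imp C) :=
  ded (.mp (wk1 h2) (.mp (wk1 h1) hyp0))

theorem efq {Γ : Set (Fml α)} {A : Fml α} (h : Hilb Γ Fml.bot) : Hilb Γ A := .mp (.ax4 A) h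

theorem disjE {Γ : Set (Fml α)} {A B C} (h : Hilb Γ (A.disj B))
    (h1 : Hilb (insert A Γ) C) (h2 : Hilb (insert B Γ) C) : Hilb Γ C :=
  .mp (.mp (.mp (.ax10 A B C) (ded h1)) (ded h2)) h

/-- A ∨ (A→⊥). -/
theorem lem' {Γ : Set (Fml α)} (A : Fml α) : Hilb Γ (A.disj (A.imp Fml.bot)) := by
  have h1 : Hilb Γ (((A.disj (A.imp Fml.bot)).imp Fml.bot).imp (A.disj (A.imp Fml.bot))) := by
    apply ded
    refine .mp (.ax9 _ _) ?_
    exact comp (.ax8 A (A.imp Fml.bot)) hyp0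
  exact .mp (.ax3 _ Fml.bot) h1

/-- from A → ⊥ conclude ¬A. -/
theorem negI {Γ : Set (Fml α)} {A : Fml α} (h : Hilb Γ (A.imp Fml.bot)) : Hilb Γ A.neg := by
  refine disjE (.ax15 A) ?_ hyp0
  exact efq (.mp (wk1 h) hyp0)

end Hilb

/-- Truth-value description formulas. -/
def desc : V3 → Fml α → Fml α
  | .t, A => A.conj (A.neg.imp .bot)
  | .b, A => A.conj A.neg
  | .f, A => A.imp .bot

namespace Hilb

theorem desc_t_1 {Γ : Set (Fml α)} {A : Fml α} (h : Hilb Γ (desc .t A)) : Hilb Γ A := conjE1 h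
theorem desc_t_2 {Γ : Set (Fml α)} {A : Fml α} (h : Hilb Γ (desc .t A)) : Hilb Γ (A.neg.imp .bot) := conjE2 h
theorem desc_b_1 {Γ : Set (Fml α)} {A : Fml α} (h : Hilb Γ (desc .b A)) : Hilb Γ A := conjE1 h
theorem desc_b_2 {Γ : Set (Fml α)} {A : Fml α} (h : Hilb Γ (desc .b A)) : Hilb Γ A.neg := conjE2 h

theorem iffE1 {Γ : Set (Fml α)} {A B : Fml α} (h : Hilb Γ (Fml.iff' A B)) : Hilb Γ (A.imp B) := conjE1 h
theorem iffE2 {Γ : Set (Fml α)} {A B : Fml α} (h : Hilb Γ (Fml.iff' A B)) : Hilb Γ (B.imp A) := conjE2 h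

theorem desc_neg {Γ : Set (Fml α)} {A : Fml α} (u : V3) (h : Hilb Γ (desc u A)) :
    Hilb Γ (desc (negT u) A.neg) := by
  cases u with
  | t => exact conjE2 h
  | b => exact conjI (conjE2 h) (.mp (iffE2 (.ax11 A)) (conjE1 h))
  | f =>
    refine conjI (negI h) ?_
    exact comp (iffE1 (.ax11 A)) h

theorem desc_conj {Γ : Set (Fml α)} {A B : Fml α} (u v : V3)
    (h1 : Hilb Γ (desc u A)) (h2 : Hilb Γ (desc v B)) :
    Hilb Γ (desc (conjT u v) (A.conj B)) := by
  cases u with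
  | f => cases v <;> exact comp (.ax5 A B) h1
  | t =>
    cases v with
    | f => exact comp (.ax6 A B) h2
    | t =>
      refine conjI (conjI (conjE1 h1) (conjE1 h2)) ?_
      refine comp (iffE1 (.ax13 A B)) ?_
      apply ded
      refine disjE hyp0 ?_ ?_
      · exact .mp (wk1 (wk1 (conjE2 h1))) hyp0
      · exact .mp (wk1 (wk1 (conjE2 h2))) hyp0
    | b =>
      refine conjI (conjI (conjE1 h1) (conjE1 h2)) ?_
      exact .mp (iffE2 (.ax13 A B)) (.mp (.ax9 _ _) (conjE2 h2))
  | b =>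
    cases v with
    | f => exact comp (.ax6 A B) h2
    | t =>
      refine conjI (conjI (conjE1 h1) (conjE1 h2)) ?_
      exact .mp (iffE2 (.ax13 A B)) (.mp (.ax8 _ _) (conjE2 h1))
    | b =>
      refine conjI (conjI (conjE1 h1) (conjE1 h2)) ?_
      exact .mp (iffE2 (.ax13 A B)) (.mp (.ax8 _ _) (conjE2 h1))

theorem desc_disj {Γ : Set (Fml α)} {A B : Fml α} (u v : V3)
    (h1 : Hilb Γ (desc u A)) (h2 : Hilb Γ (desc v B)) :
    Hilb Γ (desc (disjT u v) (A.disj B)) := by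
  cases u with
  | t =>
    cases v <;>
    · refine conjI (.mp (.ax8 A B) (conjE1 h1)) ?_
      refine comp (iffE1 (.ax14 A B)) ?_
      exact comp (.ax5 A.neg B.neg) (conjE2 h1)
  | b =>
    cases v with
    | t =>
      refine conjI (.mp (.ax9 A B) (conjE1 h2)) ?_
      refine comp (iffE1 (.ax14 A B)) ?_
      exact comp (.ax6 A.neg B.neg) (conjE2 h2)
    | b =>
      refine conjI (.mp (.ax8 A B) (conjE1 h1)) ?_
      exact .mp (iffE2 (.ax14 A B)) (conjI (conjE2 h1) (conjE2 h2))
    | f =>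
      refine conjI (.mp (.ax8 A B) (conjE1 h1)) ?_
      exact .mp (iffE2 (.ax14 A B)) (conjI (conjE2 h1) (negI h2))
  | f =>
    cases v with
    | t =>
      refine conjI (.mp (.ax9 A B) (conjE1 h2)) ?_
      refine comp (iffE1 (.ax14 A B)) ?_
      exact comp (.ax6 A.neg B.neg) (conjE2 h2)
    | b =>
      refine conjI (.mp (.ax9 A B) (conjE1 h2)) ?_
      exact .mp (iffE2 (.ax14 A B)) (conjI (negI h1) (conjE2 h2))
    | f =>
      exact .mp (.mp (.ax10 A B Fml.bot) h1) h2

theorem desc_imp {Γ : Set (Fml α)} {A B : Fml α} (u v : V3)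
    (h1 : Hilb Γ (desc u A)) (h2 : Hilb Γ (desc v B)) :
    Hilb Γ (desc (impT u v) (A.imp B)) := by
  cases u with
  | f =>
    cases v <;>
    · refine conjI (comp h1 (.ax4 B)) ?_
      exact comp (iffE1 (.ax12 A B)) (comp (.ax5 A B.neg) h1)
  | t =>
    cases v with
    | t =>
      refine conjI (.mp (.ax1 B A) (conjE1 h2)) ?_
      refine comp (iffE1 (.ax12 A B)) (comp (.ax6 A B.neg) (conjE2 h2))
    | b =>
      refine conjI (.mp (.ax1 B A) (conjE1 h2)) ?_
      exact .mp (iffE2 (.ax12 A B)) (conjI (conjE1 h1) (conjE2 h2))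
    | f =>
      apply ded
      exact .mp (wk1 h2) (.mp hyp0 (wk1 (conjE1 h1)))
  | b =>
    cases v with
    | t =>
      refine conjI (.mp (.ax1 B A) (conjE1 h2)) ?_
      refine comp (iffE1 (.ax12 A B)) (comp (.ax6 A B.neg) (conjE2 h2))
    | b =>
      refine conjI (.mp (.ax1 B A) (conjE1 h2)) ?_
      exact .mp (iffE2 (.ax12 A B)) (conjI (conjE1 h1) (conjE2 h2))
    | f =>
      apply ded
      exact .mp (wk1 h2) (.mp hyp0 (wk1 (conjE1 h1)))

/-- three-valued case split theorem. -/
theorem tri {Γ : Set (Fml α)} (A : Fml α) :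
    Hilb Γ ((desc .t A).disj ((desc .b A).disj (desc .f A))) := by
  refine disjE (.ax15 A) ?_ ?_
  · refine disjE (lem' A.neg) ?_ ?_
    · refine .mp (.ax9 _ _) (.mp (.ax8 _ _) ?_)
      exact conjI hyp1 hyp0
    · refine .mp (.ax8 _ _) ?_
      exact conjI hyp1 hyp0
  · refine disjE (lem' A) ?_ ?_
    · refine .mp (.ax9 _ _) (.mp (.ax8 _ _) ?_)
      exact conjI hyp0 hyp1
    · exact .mp (.ax9 _ _) (.mp (.ax9 _ _) hyp0)

theorem elim3 {Γ : Set (Fml α)} {C} (A : Fml α)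
    (h : ∀ v, Hilb (insert (desc v A) Γ) C) : Hilb Γ C := by
  have dt := ded (h .t); have db := ded (h .b); have df := ded (h .f)
  exact .mp (.mp (.mp (.ax10 _ _ _) dt) (.mp (.mp (.ax10 _ _ _) db) df)) (tri A)

end Hilb

/-- The hypothesis set describing σ on the variables in `l`. -/
def DOn (l : List α) (σ : α → V3) : Set (Fml α) :=
  { F | ∃ x ∈ l, F = desc (σ x) (.var x) }

theorem kalmar (A : Fml α) (l : List α) (hl : ∀ x, x ∈ l) (σ : α → V3) :
    Hilb (DOn l σ) (desc (eval σ A) A) := by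
  induction A with
  | var x => exact .hyp ⟨x, hl x, rfl⟩
  | bot => exact .ax4 .bot
  | neg A ih => exact Hilb.desc_neg _ ih
  | conj A B ih1 ih2 => exact Hilb.desc_conj _ _ ih1 ih2
  | disj A B ih1 ih2 => exact Hilb.desc_disj _ _ ih1 ih2
  | imp A B ih1 ih2 => exact Hilb.desc_imp _ _ ih1 ih2

theorem elimList {C : Fml α} (l : List α) (hnd : l.Nodup)
    (h : ∀ σ, Hilb (DOn l σ) C) : Hilb (∅ : Set (Fml α)) C := by
  classical
  induction l with
  | nil =>
    have := h (fun _ => .t)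
    have he : DOn ([] : List α) (fun _ => .t) = (∅ : Set (Fml α)) := by
      ext F; simp [DOn]
    rwa [he] at this
  | cons x l ih =>
    refine ih hnd.of_cons (fun σ => ?_)
    refine Hilb.elim3 (.var x) (fun v => ?_)
    have hx : x ∉ l := (List.nodup_cons.mp hnd).1
    have hD : DOn (x :: l) (Function.update σ x v) =
        insert (desc v (.var x)) (DOn l σ) := by
      ext F
      simp only [DOn, Set.mem_insert_iff, Set.mem_setOf_eq, List.mem_cons]
      constructor
      · rintro ⟨y, hy | hy, rfl⟩
        · subst hy; left; rw [Function.update_self]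
        · right; refine ⟨y, hy, ?_⟩
          rw [Function.update_of_ne (fun hxy : _ = x => hx (hxy ▸ hy))]
      · rintro (rfl | ⟨y, hy, rfl⟩)
        · exact ⟨x, Or.inl rfl, by rw [Function.update_self]⟩
        · exact ⟨y, Or.inr hy, by rw [Function.update_of_ne (fun hxy : _ = x => hx (hxy ▸ hy))]⟩
    have := h (Function.update σ x v)
    rwa [hD] at this

theorem hilb_complete [Fintype α] {A : Fml α} (h : ∀ σ : α → V3, eval σ A ≠ V3.f) :
    Hilb (∅ : Set (Fml α)) A := by
  classical
  refine elimList (Finset.univ.toList (α := α)) (Finset.nodup_toList _) (fun σ => ?_)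
  have hk := kalmar A (Finset.univ.toList (α := α)) (fun x => by simp) σ
  rcases hv : eval σ A with _ | _ | _
  · rw [hv] at hk; exact Hilb.conjE1 hk
  · exact absurd hv (h σ)
  · rw [hv] at hk; exact Hilb.conjE1 hk

theorem propEq_of_fequiv {φ ψ : Fml α} [Fintype α] (h : FEquiv φ ψ) : PropEq φ ψ := by
  refine PropEq.imp (hilb_complete (fun σ => ?_))
  have hv := h σ
  unfold InternEq Fml.iff'
  rcases he : eval σ φ with _|_|_ <;>
    simp [eval, hv ▸ he, he, negT, impT, conjT]

end Part1
/- ===================== AUX: Part 2, process theory ===================== -/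

section V3Lemmas

theorem conjT_comm (u v : V3) : conjT u v = conjT v u := by cases u <;> cases v <;> rfl
theorem conjT_t (v : V3) : conjT .t v = v := by cases v <;> rfl
theorem conjT_ft (v : V3) : conjT .f v = .f := by cases v <;> rfl
theorem conjT_tf (v : V3) : conjT v .f = .f := by cases v <;> rfl
theorem disjT_vv (v : V3) : disjT v v = v := by cases v <;> rfl
theorem disjT_vf (v : V3) : disjT v .f = v := by cases v <;> rfl
theorem disjT_fv (v : V3) : disjT .f v = v := by cases v <;> rfl

instance : Fintype V3 := ⟨⟨{.t, .f, .b}, by decide⟩, by intro x; cases x <;> decide⟩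

end V3Lemmas

noncomputable section Part2

attribute [local instance] Classical.propDecidable

variable {α Act : Type}

/-- the target process term of a transition. -/
def tgt (a : Act) : Option (PT α Act) → PT α Act
  | none => .act a
  | some r => .seq (.act a) r

/-- transition triples. -/
abbrev Trip (α Act : Type) := Fml α × Act × Option (PT α Act)

/-- the summand corresponding to a transition. -/
def smd (e : Trip α Act) : PT α Act := .gc e.1 (tgt e.2.1 e.2.2)

/-- sum of a list of transitions. -/
def sumT : List (Trip α Act) → PT α Act
  | [] => .delta
  | e :: l => .alt (smd e) (sumT l)

/-- filter function for sequential composition. -/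
def seqF (y : PT α Act) : Trip α Act → Option (Trip α Act)
  | (φ, a, none) => if EqBot (sig y) then none else some (φ, a, some y)
  | (φ, a, some x') => some (φ, a, some (.seq x' y))

/-- filter function for guarded command. -/
def gcF (ψ : Fml α) (e : Trip α Act) : Option (Trip α Act) :=
  if EqBot (e.1.conj ψ) then none else some (e.1.conj ψ, e.2.1, e.2.2)

/-- the list of transitions of a term. -/
def trs : PT α Act → List (Trip α Act)
  | .act a => [(Fml.top, a, none)]
  | .delta => []
  | .nex => []
  | .alt p q => if EqBot ((sig p).conj (sig q)) then [] else trs p ++ trs q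
  | .seq p y => (trs p).filterMap (seqF y)
  | .gc ψ p => (trs p).filterMap (gcF ψ)
  | .se ψ p => if EqBot (ψ.conj (sig p)) then [] else trs p

theorem Tr_of_mem : ∀ {p : PT α Act} {φ a o}, (φ, a, o) ∈ trs p → Tr p φ a o := by
  intro p
  induction p with
  | act a => intro φ a' o h; simp [trs] at h; obtain ⟨rfl, rfl, rfl⟩ := h; exact Tr.act _
  | delta => intro φ a o h; simp [trs] at h
  | nex => intro φ a o h; simp [trs] at h
  | alt p q ih1 ih2 =>
    intro φ a o h
    simp only [trs] at h
    by_cases hb : EqBot ((sig p).conj (sig q))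
    · rw [if_pos hb] at h; simp at h
    · rw [if_neg hb] at h
      rcases List.mem_append.mp h with h | h
      · exact .altL q (ih1 h) hb
      · exact .altR p (ih2 h) hb
  | seq p y ih1 _ =>
    intro φ a o h
    simp only [trs] at h
    obtain ⟨⟨φ₀, a₀, o₀⟩, h₀, hf⟩ := List.mem_filterMap.mp h
    cases o₀ with
    | none =>
      simp only [seqF] at hf
      by_cases hb : EqBot (sig y)
      · rw [if_pos hb] at hf; simp at hf
      · rw [if_neg hb] at hf
        obtain ⟨rfl, rfl, rfl⟩ : φ₀ = φ ∧ a₀ = a ∧ some y = o := by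
          simpa [eq_comm] using hf
        exact .seqT y (ih1 h₀) hb
    | some x' =>
      simp only [seqF, Option.some_inj] at hf
      obtain ⟨rfl, rfl, rfl⟩ : φ₀ = φ ∧ a₀ = a ∧ some (PT.seq x' y) = o := by
        simpa [eq_comm] using hf
      exact .seqS y (ih1 h₀)
  | gc ψ p ih =>
    intro φ a o h
    simp only [trs] at h
    obtain ⟨⟨φ₀, a₀, o₀⟩, h₀, hf⟩ := List.mem_filterMap.mp h
    simp only [gcF] at hf
    by_cases hb : EqBot (φ₀.conj ψ)
    · rw [if_pos hb] at hf; simp at hf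
    · rw [if_neg hb] at hf
      obtain ⟨rfl, rfl, rfl⟩ : φ₀.conj ψ = φ ∧ a₀ = a ∧ o₀ = o := by
        simpa [eq_comm] using hf
      exact .gcR ψ (ih h₀) hb
  | se ψ p ih =>
    intro φ a o h
    simp only [trs] at h
    by_cases hb : EqBot (ψ.conj (sig p))
    · rw [if_pos hb] at h; simp at h
    · rw [if_neg hb] at h
      exact .seR ψ (ih h) hb

theorem mem_of_Tr {p : PT α Act} {φ a o} (h : Tr p φ a o) : (φ, a, o) ∈ trs p := by
  induction h with
  | act a => simp [trs]
  | altL y h hb ih =>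
    simp only [trs]
    rw [if_neg (by simpa [sig] using hb)]
    exact List.mem_append.mpr (Or.inl ih)
  | altR x h hb ih =>
    simp only [trs]
    rw [if_neg (by simpa [sig] using hb)]
    exact List.mem_append.mpr (Or.inr ih)
  | seqT y h hb ih =>
    simp only [trs]
    exact List.mem_filterMap.mpr ⟨(_, _, none), ih, by simp [seqF, if_neg hb]⟩
  | seqS y h ih =>
    simp only [trs]
    exact List.mem_filterMap.mpr ⟨(_, _, some _), ih, by simp [seqF]⟩
  | gcR ψ h hb ih =>
    simp only [trs]
    exact List.mem_filterMap.mpr ⟨(_, _, _), ih, by simp [gcF, if_neg hb]⟩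
  | seR ψ h hb ih =>
    simp only [trs]
    rw [if_neg (by simpa [sig] using hb)]
    exact ih

/-- action depth. -/
def ad : PT α Act → Nat
  | .act _ => 1
  | .delta => 0
  | .nex => 0
  | .alt p q => max (ad p) (ad q)
  | .seq p q => ad p + ad q
  | .gc _ p => ad p
  | .se _ p => ad p

theorem ad_trs : ∀ (p : PT α Act), ∀ e ∈ trs p,
    (e.2.2 = none → 1 ≤ ad p) ∧ (∀ p', e.2.2 = some p' → ad p' < ad p) := by
  intro p
  induction p with
  | act a =>
    intro e he; simp [trs] at he; subst he
    exact ⟨fun _ => le_refl _, fun p' h => by simp at h⟩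
  | delta => intro e he; simp [trs] at he
  | nex => intro e he; simp [trs] at he
  | alt p q ih1 ih2 =>
    intro e he
    simp only [trs] at he
    by_cases hb : EqBot ((sig p).conj (sig q))
    · rw [if_pos hb] at he; simp at he
    · rw [if_neg hb] at he
      rcases List.mem_append.mp he with h | h
      · exact ⟨fun hn => le_trans ((ih1 e h).1 hn) (le_max_left _ _),
          fun p' hs => lt_of_lt_of_le ((ih1 e h).2 p' hs) (le_max_left _ _)⟩
      · exact ⟨fun hn => le_trans ((ih2 e h).1 hn) (le_max_right _ _),
          fun p' hs => lt_of_lt_of_le ((ih2 e h).2 p' hs) (le_max_right _ _)⟩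
  | seq p y ih1 _ =>
    intro e he
    simp only [trs] at he
    obtain ⟨⟨φ₀, a₀, o₀⟩, h₀, hf⟩ := List.mem_filterMap.mp he
    cases o₀ with
    | none =>
      simp only [seqF] at hf
      by_cases hb : EqBot (sig y)
      · rw [if_pos hb] at hf; simp at hf
      · rw [if_neg hb] at hf
        have h1 : 1 ≤ ad p := (ih1 _ h₀).1 rfl
        obtain rfl : (φ₀, a₀, some y) = e := by simpa using hf
        refine ⟨fun hn => by simp at hn, fun p' hs => ?_⟩
        obtain rfl : y = p' := by simpa using hs
        simp only [ad]
        omega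
    | some x' =>
      simp only [seqF] at hf
      obtain rfl : (φ₀, a₀, some (PT.seq x' y)) = e := by simpa using hf
      refine ⟨fun hn => by simp at hn, fun p' hs => ?_⟩
      obtain rfl : PT.seq x' y = p' := by simpa using hs
      have := (ih1 _ h₀).2 x' rfl
      simp only [ad]
      omega
  | gc ψ p ih =>
    intro e he
    simp only [trs] at he
    obtain ⟨⟨φ₀, a₀, o₀⟩, h₀, hf⟩ := List.mem_filterMap.mp he
    simp only [gcF] at hf
    by_cases hb : EqBot (φ₀.conj ψ)
    · rw [if_pos hb] at hf; simp at hf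
    · rw [if_neg hb] at hf
      obtain rfl : (φ₀.conj ψ, a₀, o₀) = e := by simpa using hf
      exact ih (φ₀, a₀, o₀) h₀
  | se ψ p ih =>
    intro e he
    simp only [trs] at he
    by_cases hb : EqBot (ψ.conj (sig p))
    · rw [if_pos hb] at he; simp at he
    · rw [if_neg hb] at he; exact ih e he

/- ---------- Deriv helper lemmas ---------- -/

theorem seCongR (s : Fml α) {x y : PT α Act} (h : Deriv x y) : Deriv (.se s x) (.se s y) :=
  Deriv.seC (PropEq.refl s) h

theorem gcCongR (s : Fml α) {x y : PT α Act} (h : Deriv x y) : Deriv (.gc s x) (.gc s y) :=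
  Deriv.gcC (PropEq.refl s) h

theorem sumT_append (l₁ l₂ : List (Trip α Act)) :
    Deriv (sumT (l₁ ++ l₂)) (.alt (sumT l₁) (sumT l₂)) := by
  induction l₁ with
  | nil => exact .symm ((Deriv.A1 _ _).trans (Deriv.A6 _))
  | cons e l ih => exact (Deriv.altC (Deriv.refl (smd e)) ih).trans (Deriv.A2 _ _ _).symm

theorem sumT_mem {e : Trip α Act} {l} (h : e ∈ l) :
    Deriv (sumT l) (.alt (smd e) (sumT l)) := by
  induction l with
  | nil => simp at h
  | cons e' l ih =>
    rcases List.mem_cons.mp h with rfl | h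
    · exact .symm ((Deriv.A2 _ _ _).symm.trans (Deriv.altC (Deriv.A3 _) (Deriv.refl _)))
    · have ihh := ih h
      refine (Deriv.altC (Deriv.refl (smd e')) ihh).trans ?_
      exact ((Deriv.A2 _ _ _).symm.trans (Deriv.altC (Deriv.A1 _ _) (Deriv.refl _))).trans
        (Deriv.A2 _ _ _)

theorem mem_absorb_ext {Y S u : PT α Act} (h : Deriv Y (.alt u Y)) :
    Deriv (.alt Y S) (.alt u (.alt Y S)) :=
  (Deriv.altC h (Deriv.refl S)).trans (Deriv.A2 u Y S)

section WithFintype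
variable [Fintype α]

theorem pe_of_feq {φ ψ : Fml α} (h : FEquiv φ ψ) : PropEq φ ψ := propEq_of_fequiv h

theorem pe_bot_of_eqbot {φ : Fml α} (h : EqBot φ) : PropEq φ .bot :=
  pe_of_feq (fun σ => by rw [h σ]; rfl)

theorem pe_conj_comm (φ ψ : Fml α) : PropEq (φ.conj ψ) (ψ.conj φ) :=
  pe_of_feq (fun σ => conjT_comm _ _)

theorem gc_sumT (ψ : Fml α) : ∀ l : List (Trip α Act),
    Deriv (.gc ψ (sumT l)) (sumT (l.filterMap (gcF ψ))) := by
  intro l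
  induction l with
  | nil => exact Deriv.GC3 ψ
  | cons e l ih =>
    refine (Deriv.GC4 ψ _ _).trans ?_
    have h1 : Deriv (.gc ψ (smd e)) (.gc (e.1.conj ψ) (tgt e.2.1 e.2.2)) :=
      (Deriv.GC6 ψ e.1 _).trans (Deriv.gcC (pe_conj_comm ψ e.1) (Deriv.refl _))
    by_cases hb : EqBot (e.1.conj ψ)
    · rw [List.filterMap_cons, show gcF ψ e = none from by simp [gcF, if_pos hb]]
      have h2 : Deriv (.gc ψ (smd e)) .delta :=
        h1.trans ((Deriv.gcC (pe_bot_of_eqbot hb) (Deriv.refl _)).trans (Deriv.GC2 _))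
      exact ((Deriv.altC h2 ih).trans (Deriv.A1 _ _)).trans (Deriv.A6 _)
    · rw [List.filterMap_cons,
        show gcF ψ e = some (e.1.conj ψ, e.2.1, e.2.2) from by simp [gcF, if_neg hb]]
      exact Deriv.altC h1 ih

theorem seq_sumT (y : PT α Act) (hy : EqBot (sig y) → Deriv y .nex) :
    ∀ l : List (Trip α Act),
    Deriv (.seq (sumT l) y) (sumT (l.filterMap (seqF y))) := by
  intro l
  induction l with
  | nil => exact Deriv.A7 y
  | cons e l ih =>
    refine (Deriv.A4 _ _ _).trans ?_
    obtain ⟨φ, a, o⟩ := e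
    cases o with
    | none =>
      by_cases hb : EqBot (sig y)
      · rw [List.filterMap_cons,
          show seqF y (φ, a, none) = none from by simp [seqF, if_pos hb]]
        have h2 : Deriv (.seq (smd (φ, a, none)) y) .delta := by
          refine (Deriv.GC5 φ _ _).symm.trans ?_
          refine Deriv.trans ?_ (Deriv.GC3 φ)
          exact gcCongR φ ((Deriv.seqC (Deriv.refl (.act a)) (hy hb)).trans (Deriv.NE3 a))
        exact ((Deriv.altC h2 ih).trans (Deriv.A1 _ _)).trans (Deriv.A6 _)
      · rw [List.filterMap_cons,
          show seqF y (φ, a, none) = some (φ, a, some y) from by simp [seqF, if_neg hb]]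
        exact Deriv.altC (Deriv.GC5 φ _ _).symm ih
    | some x' =>
      rw [List.filterMap_cons,
        show seqF y (φ, a, some x') = some (φ, a, some (.seq x' y)) from rfl]
      refine Deriv.altC ?_ ih
      exact (Deriv.GC5 φ _ _).symm.trans (gcCongR φ (Deriv.A5 _ _ _))

theorem hnf_deriv : ∀ p : PT α Act, Deriv p (.se (sig p) (sumT (trs p))) := by
  intro p
  induction p with
  | act a =>
    exact .symm ((Deriv.SE1 _).trans ((Deriv.A6 _).trans (Deriv.GC1 _)))
  | delta => exact (Deriv.SE1 _).symm
  | nex => exact (Deriv.SE2 _).symm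
  | alt p q ih1 ih2 =>
    have h0 : Deriv (.alt p q)
        (.se ((sig p).conj (sig q)) (.alt (sumT (trs p)) (sumT (trs q)))) := by
      refine (Deriv.altC ih1 ih2).trans ?_
      refine (Deriv.SE4 _ _ _).trans ?_
      refine (seCongR _ (Deriv.A1 _ _)).trans ?_
      refine (seCongR _ (Deriv.SE4 _ _ _)).trans ?_
      refine (Deriv.SE6 _ _ _).trans ?_
      exact Deriv.seC (PropEq.refl _) (Deriv.A1 _ _)
    show Deriv (.alt p q) (.se ((sig p).conj (sig q)) (sumT (trs (.alt p q))))
    simp only [trs]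
    by_cases hb : EqBot ((sig p).conj (sig q))
    · rw [if_pos hb]
      refine h0.trans ?_
      refine (Deriv.seC (pe_bot_of_eqbot hb) (Deriv.refl _)).trans ?_
      refine (Deriv.SE2 _).trans ?_
      exact (Deriv.SE2 (.delta)).symm.trans (Deriv.seC (pe_bot_of_eqbot hb).symm (Deriv.refl _))
    · rw [if_neg hb]
      exact h0.trans (seCongR _ (sumT_append _ _).symm)
  | seq p y ih1 ih2 =>
    have hy : EqBot (sig y) → Deriv y .nex := fun hb =>
      ih2.trans ((Deriv.seC (pe_bot_of_eqbot hb) (Deriv.refl _)).trans (Deriv.SE2 _))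
    show Deriv (.seq p y) (.se (sig p) (sumT (trs (.seq p y))))
    simp only [trs]
    refine (Deriv.seqC ih1 (Deriv.refl y)).trans ?_
    refine (Deriv.SE5 _ _ _).trans ?_
    exact seCongR _ (seq_sumT y hy (trs p))
  | gc ψ p ih =>
    show Deriv (.gc ψ p) (.se (ψ.imp (sig p)) (sumT (trs (.gc ψ p))))
    simp only [trs]
    refine (Deriv.gcC (PropEq.refl ψ) ih).trans ?_
    refine (Deriv.SE8 ψ _ _).trans ?_
    refine Deriv.seC (PropEq.refl _) ?_
    exact gc_sumT ψ (trs p)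
  | se ψ p ih =>
    have h0 : Deriv (.se ψ p) (.se (ψ.conj (sig p)) (sumT (trs p))) :=
      (Deriv.seC (PropEq.refl ψ) ih).trans (Deriv.SE6 _ _ _)
    show Deriv (.se ψ p) (.se (ψ.conj (sig p)) (sumT (trs (.se ψ p))))
    simp only [trs]
    by_cases hb : EqBot (ψ.conj (sig p))
    · rw [if_pos hb]
      refine h0.trans ?_
      refine (Deriv.seC (pe_bot_of_eqbot hb) (Deriv.refl _)).trans ?_
      refine (Deriv.SE2 _).trans ?_
      exact (Deriv.SE2 (.delta)).symm.trans (Deriv.seC (pe_bot_of_eqbot hb).symm (Deriv.refl _))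
    · rw [if_neg hb]
      exact h0

end WithFintype

end Part2
/- ===================== AUX: Part 3, absorption and completeness ===================== -/

noncomputable section Part3

attribute [local instance] Classical.propDecidable

variable {α Act : Type}

/-- characteristic formula of a truth value at a variable. -/
def descF (v : V3) (x : α) : Fml α :=
  match v with
  | .t => (Fml.var x).conj ((Fml.var x).neg.imp .bot)
  | .b => (((Fml.var x).conj (Fml.var x).neg).imp .bot).neg
  | .f => (Fml.var x).imp .bot

theorem eval_descF (σ' : α → V3) (v : V3) (x : α) :
    eval σ' (descF v x) = if σ' x = v then V3.t else V3.f := by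
  cases v <;> rcases h : σ' x <;> simp [descF, eval, h, negT, conjT, impT]

section WithFintype2
variable [Fintype α]

/-- characteristic formula of a valuation. -/
def chi (σ : α → V3) : Fml α :=
  (Finset.univ.toList (α := α)).foldr (fun x r => (descF (σ x) x).conj r) Fml.top

theorem eval_chi (σ σ' : α → V3) : eval σ' (chi σ) = if σ' = σ then V3.t else V3.f := by
  have key : ∀ l : List α,
      eval σ' (l.foldr (fun x r => (descF (σ x) x).conj r) Fml.top) =
        if (∀ x ∈ l, σ' x = σ x) then V3.t else V3.f := by
    intro l
    induction l with
    | nil => simp [eval, Fml.top, negT]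
    | cons x l ih =>
      show conjT (eval σ' (descF (σ x) x)) _ = _
      rw [ih, eval_descF]
      by_cases h1 : σ' x = σ x
      · rw [if_pos h1, conjT_t]
        by_cases h2 : ∀ y ∈ l, σ' y = σ y
        · rw [if_pos h2, if_pos (by
            intro y hy
            rcases List.mem_cons.mp hy with rfl | hy
            · exact h1
            · exact h2 y hy)]
        · rw [if_neg h2,
            if_neg (fun hall => h2 (fun y hy => hall y (List.mem_cons_of_mem _ hy)))]
      · rw [if_neg h1, conjT_ft,
          if_neg (fun hall => h1 (hall x List.mem_cons_self))]
  rw [chi, key]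
  congr 1
  simp only [Finset.mem_toList, Finset.mem_univ, forall_const, eq_iff_iff]
  constructor
  · intro h; funext x; exact h x
  · intro h x; rw [h]

/-- disjunction of a list of formulas. -/
def disjList : List (Fml α) → Fml α
  | [] => .bot
  | φ :: l => φ.disj (disjList l)

theorem eval_disjList_cells (φ : Fml α) (σ0 : α → V3) (l : List (α → V3)) :
    eval σ0 (disjList (l.map (fun σ => (chi σ).conj φ))) =
      if σ0 ∈ l then eval σ0 φ else V3.f := by
  induction l with
  | nil => simp [disjList, eval]
  | cons σ l ih =>
    show disjT (conjT (eval σ0 (chi σ)) (eval σ0 φ)) _ = _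
    rw [ih, eval_chi]
    by_cases h1 : σ0 = σ
    · rw [if_pos h1, conjT_t, if_pos (List.mem_cons.mpr (Or.inl h1))]
      by_cases h2 : σ0 ∈ l
      · rw [if_pos h2, disjT_vv]
      · rw [if_neg h2, disjT_vf]
    · rw [if_neg h1, conjT_ft, disjT_fv]
      by_cases h2 : σ0 ∈ l
      · rw [if_pos h2, if_pos (List.mem_cons.mpr (Or.inr h2))]
      · rw [if_neg h2, if_neg (by simp [List.mem_cons, h1, h2])]

/-- the list of valuation cells of a formula. -/
def cells (φ : Fml α) : List (Fml α) :=
  (Finset.univ.toList (α := α → V3)).map (fun σ => (chi σ).conj φ)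

theorem pe_cells (φ : Fml α) : PropEq φ (disjList (cells φ)) := by
  refine pe_of_feq (fun σ0 => ?_)
  rw [cells, eval_disjList_cells, if_pos (by simp)]

/-- guarded commands over a list of guards. -/
def gcs (L : List (Fml α)) (t : PT α Act) : PT α Act :=
  L.foldr (fun χ r => .alt (.gc χ t) r) .delta

theorem gc_disjList (t : PT α Act) : ∀ L : List (Fml α),
    Deriv (.gc (disjList L) t) (gcs L t) := by
  intro L
  induction L with
  | nil => exact Deriv.GC2 t
  | cons χ L ih => exact (Deriv.GC7 χ _ t).trans (Deriv.altC (Deriv.refl _) ih)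

/- ---------- absorption lemmas ---------- -/

theorem absorb_dead {χ : Fml α} {t W : PT α Act} (h : FEquiv χ .bot) :
    Deriv (.alt W (.gc χ t)) W :=
  (Deriv.altC (Deriv.refl W)
    ((Deriv.gcC (pe_of_feq h) (Deriv.refl t)).trans (Deriv.GC2 t))).trans (Deriv.A6 W)

theorem absorb_sig {s χ : Fml α} {t W : PT α Act} (h : FEquiv (s.conj χ) .bot) :
    Deriv (.se s (.alt W (.gc χ t))) (.se s W) := by
  refine (Deriv.SE7 s _).symm.trans ?_
  refine (seCongR s (Deriv.GC4 s W (.gc χ t))).trans ?_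
  refine (seCongR s (Deriv.altC (Deriv.refl _) (Deriv.GC6 s χ t))).trans ?_
  refine (seCongR s (Deriv.altC (Deriv.refl _)
    (Deriv.gcC (pe_of_feq h) (Deriv.refl t)))).trans ?_
  refine (seCongR s (Deriv.altC (Deriv.refl _) (Deriv.GC2 t))).trans ?_
  refine (seCongR s (Deriv.A6 _)).trans ?_
  exact Deriv.SE7 s W

theorem absorb_match {χ ψ : Fml α} {t t' W : PT α Act}
    (hmem : Deriv W (.alt (.gc ψ t') W)) (hj : FEquiv (ψ.disj χ) ψ)
    (ht : Deriv t t') : Deriv (.alt W (.gc χ t)) W := by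
  have h1 : Deriv (.alt (.gc ψ t') (.gc χ t)) (.gc ψ t') :=
    (Deriv.altC (Deriv.refl _) (Deriv.gcC (PropEq.refl χ) ht)).trans
      ((Deriv.GC7 ψ χ t').symm.trans (Deriv.gcC (pe_of_feq hj) (Deriv.refl t')))
  refine (Deriv.altC hmem (Deriv.refl _)).trans ?_
  refine (Deriv.A2 _ _ _).trans ?_
  refine (Deriv.altC (Deriv.refl _) (Deriv.A1 _ _)).trans ?_
  refine (Deriv.A2 _ _ _).symm.trans ?_
  exact (Deriv.altC h1 (Deriv.refl W)).trans hmem.symm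

/- ---------- covering and the absorption theorem ---------- -/

/-- `W` has, up to derivable equality, every transition in `lq` as a summand. -/
def Provider (lq : List (Trip α Act)) (W : PT α Act) : Prop :=
  ∀ e ∈ lq, Deriv W (.alt (smd e) W)

theorem Provider.ext {lq : List (Trip α Act)} {W S : PT α Act} (h : Provider lq W) :
    Provider lq (.alt W S) := fun e he => mem_absorb_ext (h e he)

/-- a transition is covered by the transitions in `lq`, up to derivability of targets. -/
def Covered (lq : List (Trip α Act)) (s : Fml α) (e : Trip α Act) : Prop :=
  ∀ σ : α → V3, eval σ s ≠ V3.f → eval σ e.1 ≠ V3.f →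
    ∃ e' ∈ lq, eval σ e'.1 = eval σ e.1 ∧
      Deriv (tgt e.2.1 e.2.2) (tgt e'.2.1 e'.2.2)

theorem absorb_cell {s : Fml α} {lq : List (Trip α Act)} {W : PT α Act}
    (hW : Provider lq W) {φ : Fml α} {a : Act} {o : Option (PT α Act)}
    (σ : α → V3) (hcov : Covered lq s (φ, a, o)) :
    Deriv (.se s (.alt W (.gc ((chi σ).conj φ) (tgt a o)))) (.se s W) := by
  by_cases h1 : eval σ φ = V3.f
  · refine seCongR s (absorb_dead (fun σ' => ?_))
    show conjT (eval σ' (chi σ)) (eval σ' φ) = V3.f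
    rw [eval_chi]
    by_cases h : σ' = σ
    · rw [if_pos h, conjT_t, h, h1]
    · rw [if_neg h, conjT_ft]
  by_cases h2 : eval σ s = V3.f
  · refine absorb_sig (fun σ' => ?_)
    show conjT (eval σ' s) (conjT (eval σ' (chi σ)) (eval σ' φ)) = V3.f
    rw [eval_chi]
    by_cases h : σ' = σ
    · rw [if_pos h, h, h2, conjT_ft]
    · rw [if_neg h, conjT_ft, conjT_tf]
  obtain ⟨⟨ψ, a', o'⟩, hmem, hev, ht⟩ := hcov σ h2 h1
  refine seCongR s (absorb_match (hW _ hmem) (fun σ' => ?_) ht)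
  show disjT (eval σ' ψ) (conjT (eval σ' (chi σ)) (eval σ' φ)) = eval σ' ψ
  rw [eval_chi]
  by_cases h : σ' = σ
  · rw [if_pos h, conjT_t, h, hev, disjT_vv]
  · rw [if_neg h, conjT_ft, disjT_vf]

theorem absorb_gcs {s : Fml α} {lq : List (Trip α Act)} {W : PT α Act}
    (hW : Provider lq W) {φ : Fml α} {a : Act} {o : Option (PT α Act)}
    (hcov : Covered lq s (φ, a, o)) :
    ∀ l : List (α → V3),
      Deriv (.se s (.alt W (gcs (l.map (fun σ => (chi σ).conj φ)) (tgt a o)))) (.se s W) := by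
  intro l
  induction l generalizing W with
  | nil => exact seCongR s (Deriv.A6 W)
  | cons σ l ih =>
    refine (seCongR s ((Deriv.altC (Deriv.refl W) (Deriv.A1 _ _)).trans
      (Deriv.A2 _ _ _).symm)).trans ?_
    refine Deriv.trans ?_ (ih hW)
    exact absorb_cell (hW.ext) σ hcov

theorem absorb_smd {s : Fml α} {lq : List (Trip α Act)} {W : PT α Act}
    (hW : Provider lq W) {e : Trip α Act} (hcov : Covered lq s e) :
    Deriv (.se s (.alt W (smd e))) (.se s W) := by
  obtain ⟨φ, a, o⟩ := e
  refine (seCongR s (Deriv.altC (Deriv.refl W)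
    ((Deriv.gcC (pe_cells φ) (Deriv.refl _)).trans (gc_disjList _ _)))).trans ?_
  exact absorb_gcs hW hcov _

theorem absorb_all {s : Fml α} {lq : List (Trip α Act)} {W : PT α Act}
    (hW : Provider lq W) :
    ∀ lz : List (Trip α Act), (∀ e ∈ lz, Covered lq s e) →
      Deriv (.se s (.alt W (sumT lz))) (.se s W) := by
  intro lz
  induction lz generalizing W with
  | nil => intro _; exact seCongR s (Deriv.A6 W)
  | cons e lz ih =>
    intro hcov
    refine (seCongR s ((Deriv.altC (Deriv.refl W) (Deriv.A1 _ _)).trans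
      (Deriv.A2 _ _ _).symm)).trans ?_
    refine Deriv.trans ?_ (ih hW (fun e' he' => hcov e' (List.mem_cons_of_mem _ he')))
    exact absorb_smd (hW.ext) (hcov e List.mem_cons_self)

end WithFintype2

theorem bisim_symm {p q : PT α Act} (h : Bisim p q) : Bisim q p := by
  obtain ⟨R, hR, hpq⟩ := h
  exact ⟨fun u v => R v u, fun u v huv => ⟨(hR v u huv).2, (hR v u huv).1⟩, hpq⟩

section Main
variable [Fintype α]

theorem main_completeness : ∀ n : ℕ, ∀ p q : PT α Act, ad p + ad q ≤ n →
    Bisim p q → Deriv p q := by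
  intro n
  induction n using Nat.strong_induction_on with
  | _ n IH =>
    intro p q hn hb
    obtain ⟨R, hR, hpq⟩ := hb
    obtain ⟨⟨hsim1, hsig1⟩, ⟨hsim2, _⟩⟩ := hR p q hpq
    have hcovP : ∀ e ∈ trs p, Covered (trs q) (sig p) e := by
      rintro ⟨φ, a, o⟩ he σ h1 h2
      obtain ⟨ψ, o', hev, htr', hopt⟩ := hsim1 φ a o (Tr_of_mem he) σ h1 h2
      refine ⟨(ψ, a, o'), mem_of_Tr htr', hev, ?_⟩
      cases o with
      | none =>
        cases o' with
        | none => exact Deriv.refl _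
        | some q' => exact absurd hopt (by simp [OptR])
      | some p' =>
        cases o' with
        | none => exact absurd hopt (by simp [OptR])
        | some q' =>
          have hRp : R p' q' := hopt
          have hlt1 : ad p' < ad p := (ad_trs p _ he).2 p' rfl
          have hlt2 : ad q' < ad q := (ad_trs q _ (mem_of_Tr htr')).2 q' rfl
          have hder : Deriv p' q' :=
            IH (ad p' + ad q') (by omega) p' q' le_rfl ⟨R, hR, hRp⟩
          exact Deriv.seqC (Deriv.refl _) hder
    have hcovQ : ∀ e ∈ trs q, Covered (trs p) (sig q) e := by
      rintro ⟨φ, a, o⟩ he σ h1 h2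
      obtain ⟨ψ, o', hev, htr', hopt⟩ := hsim2 φ a o (Tr_of_mem he) σ h1 h2
      refine ⟨(ψ, a, o'), mem_of_Tr htr', hev, ?_⟩
      cases o with
      | none =>
        cases o' with
        | none => exact Deriv.refl _
        | some p' => exact absurd hopt (by simp [OptR])
      | some q' =>
        cases o' with
        | none => exact absurd hopt (by simp [OptR])
        | some p' =>
          have hRp : R p' q' := hopt
          have hlt1 : ad q' < ad q := (ad_trs q _ he).2 q' rfl
          have hlt2 : ad p' < ad p := (ad_trs p _ (mem_of_Tr htr')).2 p' rfl
          have hder : Deriv p' q' :=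
            IH (ad p' + ad q') (by omega) p' q' le_rfl ⟨R, hR, hRp⟩
          exact Deriv.seqC (Deriv.refl _) hder.symm
    have hPq : Provider (trs q) (sumT (trs q)) := fun e he => sumT_mem he
    have hPp : Provider (trs p) (sumT (trs p)) := fun e he => sumT_mem he
    have habs1 : Deriv (.se (sig p) (.alt (sumT (trs q)) (sumT (trs p))))
        (.se (sig p) (sumT (trs q))) := absorb_all hPq (trs p) hcovP
    have habs2 : Deriv (.se (sig q) (.alt (sumT (trs p)) (sumT (trs q))))
        (.se (sig q) (sumT (trs p))) := absorb_all hPp (trs q) hcovQ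
    have pe_ss : PropEq (sig p) (sig q) := pe_of_feq hsig1
    refine (hnf_deriv p).trans ?_
    refine Deriv.trans ?_ (hnf_deriv q).symm
    refine (Deriv.seC pe_ss (Deriv.refl _)).trans ?_
    refine Deriv.trans (habs2.symm) ?_
    refine (seCongR _ (Deriv.A1 _ _)).trans ?_
    refine (Deriv.seC pe_ss.symm (Deriv.refl _)).trans ?_
    refine habs1.trans ?_
    exact Deriv.seC pe_ss (Deriv.refl _)

end Main

end Part3

/-- Completeness of ctBPAps with respect to bisimulation equivalence. -/
theorem ctBPAps_completeness {α Act : Type} [Fintype α] [Fintype Act]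
    (p q : PT α Act) (h : Bisim p q) : Deriv p q :=
  main_completeness (ad p + ad q) p q le_rfl h
end

section
/- For every closed ctACPps process term p there exists a basic term q ∈ B (a basic term of ctBPAps) such that the equation p = q is derivable from the axioms of ctACPps. -/
set_option autoImplicit true
set_option maxHeartbeats 1000000

/-- Closed ctACPps process terms (δ is `delta`, ⊗ is `nex`, `gc`/`se` are the
guarded command and signal emission, `par` is ∥, `lm` is left merge ⌊⌊,
`cm` is communication merge |, `encap H` is ∂_H). -/
inductive APT (α Act : Type) : Type
  | act : Act → APT α Act
  | delta : APT α Act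
  | nex : APT α Act
  | alt : APT α Act → APT α Act → APT α Act
  | seq : APT α Act → APT α Act → APT α Act
  | gc : Fml α → APT α Act → APT α Act
  | se : Fml α → APT α Act → APT α Act
  | par : APT α Act → APT α Act → APT α Act
  | lm : APT α Act → APT α Act → APT α Act
  | cm : APT α Act → APT α Act → APT α Act
  | encap : Set Act → APT α Act → APT α Act

/-- The constant corresponding to an element of A ∪ {δ} (encoded as `Option Act`,
with `none` standing for δ). -/
def actd {α Act : Type} : Option Act → APT α Act
  | some a => .act a
  | none => .delta

section
variable {α Act : Type}

/-- Derivable equality from the axioms of ctACPps (γ is the communication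
function on A ∪ {δ}; `a | b` in the axioms stands for γ(a,b), which is the
content of axiom `CF`): the least congruence satisfying A1-A7, NE1-NE3,
GC1-GC7, SE1-SE8, IMP, CM1-CM9 (with CM2S, CM3S), C1-C3, D1-D4,
GC8S-GC11 and SE9-SE12. -/
inductive ADeriv (γ : Option Act → Option Act → Option Act) :
    APT α Act → APT α Act → Prop
  | refl (p : APT α Act) : ADeriv γ p p
  | symm {p q} : ADeriv γ p q → ADeriv γ q p
  | trans {p q r} : ADeriv γ p q → ADeriv γ q r → ADeriv γ p r
  | altC {p q p' q'} : ADeriv γ p q → ADeriv γ p' q' → ADeriv γ (.alt p p') (.alt q q')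
  | seqC {p q p' q'} : ADeriv γ p q → ADeriv γ p' q' → ADeriv γ (.seq p p') (.seq q q')
  | gcC {φ ψ p q} : PropEq φ ψ → ADeriv γ p q → ADeriv γ (.gc φ p) (.gc ψ q)
  | seC {φ ψ p q} : PropEq φ ψ → ADeriv γ p q → ADeriv γ (.se φ p) (.se ψ q)
  | parC {p q p' q'} : ADeriv γ p q → ADeriv γ p' q' → ADeriv γ (.par p p') (.par q q')
  | lmC {p q p' q'} : ADeriv γ p q → ADeriv γ p' q' → ADeriv γ (.lm p p') (.lm q q')
  | cmC {p q p' q'} : ADeriv γ p q → ADeriv γ p' q' → ADeriv γ (.cm p p') (.cm q q')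
  | encapC (H : Set Act) {p q} : ADeriv γ p q → ADeriv γ (.encap H p) (.encap H q)
  | A1 (x y : APT α Act) : ADeriv γ (.alt x y) (.alt y x)
  | A2 (x y z : APT α Act) : ADeriv γ (.alt (.alt x y) z) (.alt x (.alt y z))
  | A3 (x : APT α Act) : ADeriv γ (.alt x x) x
  | A4 (x y z : APT α Act) : ADeriv γ (.seq (.alt x y) z) (.alt (.seq x z) (.seq y z))
  | A5 (x y z : APT α Act) : ADeriv γ (.seq (.seq x y) z) (.seq x (.seq y z))
  | A6 (x : APT α Act) : ADeriv γ (.alt x .delta) x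
  | A7 (x : APT α Act) : ADeriv γ (.seq .delta x) .delta
  | NE1 (x : APT α Act) : ADeriv γ (.alt x .nex) .nex
  | NE2 (x : APT α Act) : ADeriv γ (.seq .nex x) .nex
  | NE3 (a : Option Act) : ADeriv γ (.seq (actd a) .nex) (.delta : APT α Act)
  | GC1 (x : APT α Act) : ADeriv γ (.gc Fml.top x) x
  | GC2 (x : APT α Act) : ADeriv γ (.gc .bot x) .delta
  | GC3 (φ : Fml α) : ADeriv γ (.gc φ .delta) (.delta : APT α Act)
  | GC4 (φ : Fml α) (x y : APT α Act) :
      ADeriv γ (.gc φ (.alt x y)) (.alt (.gc φ x) (.gc φ y))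
  | GC5 (φ : Fml α) (x y : APT α Act) : ADeriv γ (.gc φ (.seq x y)) (.seq (.gc φ x) y)
  | GC6 (φ ψ : Fml α) (x : APT α Act) : ADeriv γ (.gc φ (.gc ψ x)) (.gc (φ.conj ψ) x)
  | GC7 (φ ψ : Fml α) (x : APT α Act) :
      ADeriv γ (.gc (φ.disj ψ) x) (.alt (.gc φ x) (.gc ψ x))
  | SE1 (x : APT α Act) : ADeriv γ (.se Fml.top x) x
  | SE2 (x : APT α Act) : ADeriv γ (.se .bot x) .nex
  | SE3 (φ : Fml α) : ADeriv γ (.se φ .nex) (.nex : APT α Act)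
  | SE4 (φ : Fml α) (x y : APT α Act) : ADeriv γ (.alt (.se φ x) y) (.se φ (.alt x y))
  | SE5 (φ : Fml α) (x y : APT α Act) : ADeriv γ (.seq (.se φ x) y) (.se φ (.seq x y))
  | SE6 (φ ψ : Fml α) (x : APT α Act) : ADeriv γ (.se φ (.se ψ x)) (.se (φ.conj ψ) x)
  | SE7 (φ : Fml α) (x : APT α Act) : ADeriv γ (.se φ (.gc φ x)) (.se φ x)
  | SE8 (φ ψ : Fml α) (x : APT α Act) :
      ADeriv γ (.gc φ (.se ψ x)) (.se (φ.imp ψ) (.gc φ x))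
  | CM1 (x y : APT α Act) :
      ADeriv γ (.par x y) (.alt (.alt (.lm x y) (.lm y x)) (.cm x y))
  | CM2S (a : Option Act) (x : APT α Act) :
      ADeriv γ (.lm (actd a) x) (.alt (.seq (actd a) x) (.encap Set.univ x))
  | CM3S (a : Option Act) (x y : APT α Act) :
      ADeriv γ (.lm (.seq (actd a) x) y)
        (.alt (.seq (actd a) (.par x y)) (.encap Set.univ y))
  | CM4 (x y z : APT α Act) : ADeriv γ (.lm (.alt x y) z) (.alt (.lm x z) (.lm y z))
  | CM5 (a b : Option Act) (x : APT α Act) :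
      ADeriv γ (.cm (.seq (actd a) x) (actd b)) (.seq (actd (γ a b)) x)
  | CM6 (a b : Option Act) (x : APT α Act) :
      ADeriv γ (.cm (actd a) (.seq (actd b) x)) (.seq (actd (γ a b)) x)
  | CM7 (a b : Option Act) (x y : APT α Act) :
      ADeriv γ (.cm (.seq (actd a) x) (.seq (actd b) y)) (.seq (actd (γ a b)) (.par x y))
  | CM8 (x y z : APT α Act) : ADeriv γ (.cm (.alt x y) z) (.alt (.cm x z) (.cm y z))
  | CM9 (x y z : APT α Act) : ADeriv γ (.cm x (.alt y z)) (.alt (.cm x y) (.cm x z))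
  | CF (a b : Option Act) : ADeriv γ (.cm (actd a) (actd b)) (actd (γ a b) : APT α Act)
  | C1 (a b : Option Act) :
      ADeriv γ (.cm (actd a) (actd b)) (.cm (actd b) (actd a) : APT α Act)
  | C2 (a b c : Option Act) :
      ADeriv γ (.cm (.cm (actd a) (actd b)) (actd c))
        (.cm (actd a) (.cm (actd b) (actd c)) : APT α Act)
  | C3 (a : Option Act) : ADeriv γ (.cm .delta (actd a)) (.delta : APT α Act)
  | D1 (H : Set Act) (a : Act) : a ∉ H → ADeriv γ (.encap H (.act a)) (.act a)
  | D1d (H : Set Act) : ADeriv γ (.encap H (.delta : APT α Act)) .delta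
  | D2 (H : Set Act) (a : Act) : a ∈ H → ADeriv γ (.encap H (.act a)) .delta
  | D3 (H : Set Act) (x y : APT α Act) :
      ADeriv γ (.encap H (.alt x y)) (.alt (.encap H x) (.encap H y))
  | D4 (H : Set Act) (x y : APT α Act) :
      ADeriv γ (.encap H (.seq x y)) (.seq (.encap H x) (.encap H y))
  | GC8S (φ : Fml α) (x y : APT α Act) :
      ADeriv γ (.lm (.gc φ x) y) (.alt (.gc φ (.lm x y)) (.encap Set.univ y))
  | GC9S (φ : Fml α) (x y : APT α Act) :
      ADeriv γ (.cm (.gc φ x) y) (.alt (.gc φ (.cm x y)) (.encap Set.univ y))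
  | GC10S (φ : Fml α) (x y : APT α Act) :
      ADeriv γ (.cm x (.gc φ y)) (.alt (.gc φ (.cm x y)) (.encap Set.univ x))
  | GC11 (H : Set Act) (φ : Fml α) (x : APT α Act) :
      ADeriv γ (.encap H (.gc φ x)) (.gc φ (.encap H x))
  | SE9 (φ : Fml α) (x y : APT α Act) : ADeriv γ (.lm (.se φ x) y) (.se φ (.lm x y))
  | SE10 (φ : Fml α) (x y : APT α Act) : ADeriv γ (.cm (.se φ x) y) (.se φ (.cm x y))
  | SE11 (φ : Fml α) (x y : APT α Act) : ADeriv γ (.cm x (.se φ y)) (.se φ (.cm x y))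
  | SE12 (H : Set Act) (φ : Fml α) (x : APT α Act) :
      ADeriv γ (.encap H (.se φ x)) (.se φ (.encap H x))

/-- Basic terms (basic terms of ctBPAps, within the ctACPps syntax). -/
inductive ABasic : APT α Act → Prop
  | nex : ABasic (.nex : APT α Act)
  | emiDelta {φ : Fml α} : ¬ EqBot φ → ABasic (.se φ .delta)
  | gcAct {φ : Fml α} (a : Act) : ¬ EqBot φ → ABasic (.gc φ (.act a))
  | gcSeq {φ : Fml α} (a : Act) {p : APT α Act} :
      ¬ EqBot φ → ABasic p → ABasic (.gc φ (.seq (.act a) p))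
  | alt {p q : APT α Act} : ABasic p → ABasic q → ABasic (.alt p q)

/-- The signal (root signal) emitted by a process term. -/
def sigA : APT α Act → Fml α
  | .act _ => Fml.top
  | .delta => Fml.top
  | .nex => .bot
  | .alt p q => (sigA p).conj (sigA q)
  | .seq p _ => sigA p
  | .gc φ p => φ.imp (sigA p)
  | .se φ p => φ.conj (sigA p)
  | .par p q => (sigA p).conj (sigA q)
  | .lm p q => (sigA p).conj (sigA q)
  | .cm p q => (sigA p).conj (sigA q)
  | .encap _ p => sigA p

/-- The structural operational semantics of ctACPps: `ATr γ p φ a (some q)` is the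
action step p –φ,a→ q and `ATr γ p φ a none` is the action termination p –φ,a→ √. -/
inductive ATr (γ : Option Act → Option Act → Option Act) :
    APT α Act → Fml α → Act → Option (APT α Act) → Prop
  | act (a : Act) : ATr γ (.act a) Fml.top a none
  | altL {x φ a o} (y : APT α Act) :
      ATr γ x φ a o → ¬ EqBot (sigA (APT.alt x y)) → ATr γ (.alt x y) φ a o
  | altR {y φ a o} (x : APT α Act) :
      ATr γ y φ a o → ¬ EqBot (sigA (APT.alt x y)) → ATr γ (.alt x y) φ a o
  | seqT {x φ a} (y : APT α Act) :
      ATr γ x φ a none → ¬ EqBot (sigA y) → ATr γ (.seq x y) φ a (some y)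
  | seqS {x φ a x'} (y : APT α Act) :
      ATr γ x φ a (some x') → ATr γ (.seq x y) φ a (some (.seq x' y))
  | gcR {x φ a o} (ψ : Fml α) :
      ATr γ x φ a o → ¬ EqBot (φ.conj ψ) → ATr γ (.gc ψ x) (φ.conj ψ) a o
  | seR {x φ a o} (ψ : Fml α) :
      ATr γ x φ a o → ¬ EqBot (sigA (APT.se ψ x)) → ATr γ (.se ψ x) φ a o
  | parTL {x φ a} (y : APT α Act) :
      ATr γ x φ a none → ¬ EqBot (sigA (APT.par x y)) → ¬ EqBot (sigA y) →
      ATr γ (.par x y) φ a (some y)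
  | parTR (x : APT α Act) {y φ a} :
      ATr γ y φ a none → ¬ EqBot (sigA (APT.par x y)) → ¬ EqBot (sigA x) →
      ATr γ (.par x y) φ a (some x)
  | parSL {x φ a x'} (y : APT α Act) :
      ATr γ x φ a (some x') → ¬ EqBot (sigA (APT.par x y)) →
      ¬ EqBot (sigA (APT.par x' y)) → ATr γ (.par x y) φ a (some (.par x' y))
  | parSR (x : APT α Act) {y φ a y'} :
      ATr γ y φ a (some y') → ¬ EqBot (sigA (APT.par x y)) →
      ¬ EqBot (sigA (APT.par x y')) → ATr γ (.par x y) φ a (some (.par x y'))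
  | parCTT {x y : APT α Act} {φ ψ a b c} :
      ATr γ x φ a none → ATr γ y ψ b none → γ (some a) (some b) = some c →
      ¬ EqBot (φ.conj ψ) → ¬ EqBot (sigA (APT.par x y)) →
      ATr γ (.par x y) (φ.conj ψ) c none
  | parCTS {x y : APT α Act} {φ ψ a b c y'} :
      ATr γ x φ a none → ATr γ y ψ b (some y') → γ (some a) (some b) = some c →
      ¬ EqBot (φ.conj ψ) → ¬ EqBot (sigA (APT.par x y)) →
      ATr γ (.par x y) (φ.conj ψ) c (some y')
  | parCST {x y : APT α Act} {φ ψ a b c x'} :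
      ATr γ x φ a (some x') → ATr γ y ψ b none → γ (some a) (some b) = some c →
      ¬ EqBot (φ.conj ψ) → ¬ EqBot (sigA (APT.par x y)) →
      ATr γ (.par x y) (φ.conj ψ) c (some x')
  | parCSS {x y : APT α Act} {φ ψ a b c x' y'} :
      ATr γ x φ a (some x') → ATr γ y ψ b (some y') → γ (some a) (some b) = some c →
      ¬ EqBot (φ.conj ψ) → ¬ EqBot (sigA (APT.par x y)) →
      ¬ EqBot (sigA (APT.par x' y')) →
      ATr γ (.par x y) (φ.conj ψ) c (some (.par x' y'))
  | lmT {x φ a} (y : APT α Act) :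
      ATr γ x φ a none → ¬ EqBot (sigA (APT.lm x y)) → ¬ EqBot (sigA y) →
      ATr γ (.lm x y) φ a (some y)
  | lmS {x φ a x'} (y : APT α Act) :
      ATr γ x φ a (some x') → ¬ EqBot (sigA (APT.lm x y)) →
      ¬ EqBot (sigA (APT.par x' y)) → ATr γ (.lm x y) φ a (some (.par x' y))
  | cmTT {x y : APT α Act} {φ ψ a b c} :
      ATr γ x φ a none → ATr γ y ψ b none → γ (some a) (some b) = some c →
      ¬ EqBot (φ.conj ψ) → ¬ EqBot (sigA (APT.cm x y)) →
      ATr γ (.cm x y) (φ.conj ψ) c none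
  | cmTS {x y : APT α Act} {φ ψ a b c y'} :
      ATr γ x φ a none → ATr γ y ψ b (some y') → γ (some a) (some b) = some c →
      ¬ EqBot (φ.conj ψ) → ¬ EqBot (sigA (APT.cm x y)) →
      ATr γ (.cm x y) (φ.conj ψ) c (some y')
  | cmST {x y : APT α Act} {φ ψ a b c x'} :
      ATr γ x φ a (some x') → ATr γ y ψ b none → γ (some a) (some b) = some c →
      ¬ EqBot (φ.conj ψ) → ¬ EqBot (sigA (APT.cm x y)) →
      ATr γ (.cm x y) (φ.conj ψ) c (some x')
  | cmSS {x y : APT α Act} {φ ψ a b c x' y'} :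
      ATr γ x φ a (some x') → ATr γ y ψ b (some y') → γ (some a) (some b) = some c →
      ¬ EqBot (φ.conj ψ) → ¬ EqBot (sigA (APT.cm x y)) →
      ¬ EqBot (sigA (APT.par x' y')) →
      ATr γ (.cm x y) (φ.conj ψ) c (some (.par x' y'))
  | encapR {x φ a o} (H : Set Act) :
      ATr γ x φ a o → a ∉ H → ATr γ (.encap H x) φ a (Option.map (APT.encap H) o)

/-- Lift a relation on process terms to their optional (√-extended) targets. -/
def AOptR (R : APT α Act → APT α Act → Prop) :
    Option (APT α Act) → Option (APT α Act) → Prop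
  | none, none => True
  | some p, some q => R p q
  | _, _ => False

/-- The (one-directional) simulation conditions of a splitting bisimulation. -/
def ASim (γ : Option Act → Option Act → Option Act)
    (R : APT α Act → APT α Act → Prop) (p q : APT α Act) : Prop :=
  (∀ φ a o, ATr γ p φ a o →
    ∀ σ : α → V3, eval σ (sigA p) ≠ V3.f → eval σ φ ≠ V3.f →
      ∃ ψ o', eval σ ψ = eval σ φ ∧ ATr γ q ψ a o' ∧ AOptR R o o') ∧
  FEquiv (sigA p) (sigA q)

/-- `R` is a bisimulation. -/
def AIsBisim (γ : Option Act → Option Act → Option Act)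
    (R : APT α Act → APT α Act → Prop) : Prop :=
  ∀ p q, R p q → ASim γ R p q ∧ ASim γ (fun u v => R v u) q p

/-- Bisimulation equivalence. -/
def ABisim (γ : Option Act → Option Act → Option Act) (p q : APT α Act) : Prop :=
  ∃ R, AIsBisim γ R ∧ R p q

end

namespace LPProof

open Fml V3

variable {α : Type} {Γ : Set (Fml α)} {A B C : Fml α}

theorem hmono {Γ Γ' : Set (Fml α)} (hs : Γ ⊆ Γ') {A : Fml α} (h : Hilb Γ A) :
    Hilb Γ' A := by
  induction h with
  | hyp h => exact .hyp (hs h)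
  | mp _ _ ih1 ih2 => exact .mp ih1 ih2
  | ax1 A B => exact .ax1 A B
  | ax2 A B C => exact .ax2 A B C
  | ax3 A B => exact .ax3 A B
  | ax4 A => exact .ax4 A
  | ax5 A B => exact .ax5 A B
  | ax6 A B => exact .ax6 A B
  | ax7 A B => exact .ax7 A B
  | ax8 A B => exact .ax8 A B
  | ax9 A B => exact .ax9 A B
  | ax10 A B C => exact .ax10 A B C
  | ax11 A => exact .ax11 A
  | ax12 A B => exact .ax12 A B
  | ax13 A B => exact .ax13 A B
  | ax14 A B => exact .ax14 A B
  | ax15 A => exact .ax15 A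

theorem hid (A : Fml α) : Hilb Γ (A.imp A) :=
  ((Hilb.ax2 A (A.imp A) A).mp (Hilb.ax1 A (A.imp A))).mp (Hilb.ax1 A A)

theorem deduction {A B : Fml α} (h : Hilb (insert A Γ) B) : Hilb Γ (A.imp B) := by
  induction h with
  | hyp h =>
    rcases Set.mem_insert_iff.mp h with rfl | h
    · exact hid _
    · exact (Hilb.ax1 _ _).mp (.hyp h)
  | mp _ _ ih1 ih2 => exact ((Hilb.ax2 _ _ _).mp ih1).mp ih2
  | ax1 A B => exact (Hilb.ax1 _ _).mp (.ax1 A B)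
  | ax2 A B C => exact (Hilb.ax1 _ _).mp (.ax2 A B C)
  | ax3 A B => exact (Hilb.ax1 _ _).mp (.ax3 A B)
  | ax4 A => exact (Hilb.ax1 _ _).mp (.ax4 A)
  | ax5 A B => exact (Hilb.ax1 _ _).mp (.ax5 A B)
  | ax6 A B => exact (Hilb.ax1 _ _).mp (.ax6 A B)
  | ax7 A B => exact (Hilb.ax1 _ _).mp (.ax7 A B)
  | ax8 A B => exact (Hilb.ax1 _ _).mp (.ax8 A B)
  | ax9 A B => exact (Hilb.ax1 _ _).mp (.ax9 A B)
  | ax10 A B C => exact (Hilb.ax1 _ _).mp (.ax10 A B C)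
  | ax11 A => exact (Hilb.ax1 _ _).mp (.ax11 A)
  | ax12 A B => exact (Hilb.ax1 _ _).mp (.ax12 A B)
  | ax13 A B => exact (Hilb.ax1 _ _).mp (.ax13 A B)
  | ax14 A B => exact (Hilb.ax1 _ _).mp (.ax14 A B)
  | ax15 A => exact (Hilb.ax1 _ _).mp (.ax15 A)

/-- composition of implications -/
theorem comp (h1 : Hilb Γ (A.imp B)) (h2 : Hilb Γ (B.imp C)) : Hilb Γ (A.imp C) :=
  ((Hilb.ax2 A B C).mp ((Hilb.ax1 (B.imp C) A).mp h2)).mp h1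

/-- disjunction elimination -/
theorem disjE (h1 : Hilb Γ (A.imp C)) (h2 : Hilb Γ (B.imp C)) :
    Hilb Γ ((A.disj B).imp C) :=
  ((Hilb.ax10 A B C).mp h1).mp h2

theorem topI : Hilb Γ (Fml.top : Fml α) :=
  (disjE (Hilb.ax4 (Fml.bot.neg)) (hid _)).mp (Hilb.ax15 .bot)

theorem ofNegImpBot (h : Hilb Γ (A.neg.imp .bot)) : Hilb Γ A :=
  (disjE (hid A) (comp h (Hilb.ax4 A))).mp (Hilb.ax15 A)

theorem negI (h : Hilb Γ (A.imp .bot)) : Hilb Γ A.neg :=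
  (disjE (comp h (Hilb.ax4 A.neg)) (hid A.neg)).mp (Hilb.ax15 A)

theorem conjI (h1 : Hilb Γ A) (h2 : Hilb Γ B) : Hilb Γ (A.conj B) :=
  ((Hilb.ax7 A B).mp h1).mp h2

theorem iffFwd (h : Hilb Γ (Fml.iff' A B)) : Hilb Γ (A.imp B) := (Hilb.ax5 _ _).mp h

theorem iffBwd (h : Hilb Γ (Fml.iff' A B)) : Hilb Γ (B.imp A) := (Hilb.ax6 _ _).mp h

theorem dni (h : Hilb Γ A) : Hilb Γ A.neg.neg := (iffBwd (Hilb.ax11 A)).mp h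

theorem impApp (h : Hilb Γ B) : Hilb Γ ((B.imp C).imp C) :=
  deduction ((Hilb.hyp (Set.mem_insert _ _)).mp (hmono (Set.subset_insert _ _) h))

/-- A ∨ (A → ⊥) -/
theorem lemImp (A : Fml α) : Hilb Γ (A.disj (A.imp .bot)) := by
  have h1 : Hilb (insert ((A.disj (A.imp .bot)).imp .bot) Γ) (A.imp .bot) := by
    apply deduction
    exact (Hilb.hyp (Set.mem_insert_of_mem _ (Set.mem_insert _ _))).mp
      ((Hilb.ax8 A (A.imp .bot)).mp (.hyp (Set.mem_insert _ _)))
  have h2 := deduction ((Hilb.ax9 A (A.imp .bot)).mp h1)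
  exact (Hilb.ax3 (A.disj (A.imp .bot)) .bot).mp h2

end LPProof
namespace LPProof

variable {α : Type} {Γ : Set (Fml α)}

theorem conjT_ne_f {x y : V3} : conjT x y ≠ .f ↔ x ≠ .f ∧ y ≠ .f := by
  cases x <;> cases y <;> simp [conjT]
theorem conjT_ne_t {x y : V3} : conjT x y ≠ .t ↔ x ≠ .t ∨ y ≠ .t := by
  cases x <;> cases y <;> simp [conjT]
theorem conjT_eq_f {x y : V3} : conjT x y = .f ↔ x = .f ∨ y = .f := by
  cases x <;> cases y <;> simp [conjT]
theorem conjT_eq_t {x y : V3} : conjT x y = .t ↔ x = .t ∧ y = .t := by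
  cases x <;> cases y <;> simp [conjT]
theorem disjT_ne_f {x y : V3} : disjT x y ≠ .f ↔ x ≠ .f ∨ y ≠ .f := by
  cases x <;> cases y <;> simp [disjT]
theorem disjT_ne_t {x y : V3} : disjT x y ≠ .t ↔ x ≠ .t ∧ y ≠ .t := by
  cases x <;> cases y <;> simp [disjT]
theorem disjT_eq_f {x y : V3} : disjT x y = .f ↔ x = .f ∧ y = .f := by
  cases x <;> cases y <;> simp [disjT]
theorem disjT_eq_t {x y : V3} : disjT x y = .t ↔ x = .t ∨ y = .t := by
  cases x <;> cases y <;> simp [disjT]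
theorem impT_ne_f {x y : V3} : impT x y ≠ .f ↔ x = .f ∨ y ≠ .f := by
  cases x <;> cases y <;> simp [impT]
theorem impT_ne_t {x y : V3} : impT x y ≠ .t ↔ x ≠ .f ∧ y ≠ .t := by
  cases x <;> cases y <;> simp [impT]
theorem impT_eq_f {x y : V3} : impT x y = .f ↔ x ≠ .f ∧ y = .f := by
  cases x <;> cases y <;> simp [impT]
theorem impT_eq_t {x y : V3} : impT x y = .t ↔ x = .f ∨ y = .t := by
  cases x <;> cases y <;> simp [impT]
theorem negT_ne_f {x : V3} : negT x ≠ .f ↔ x ≠ .t := by cases x <;> simp [negT]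
theorem negT_ne_t {x : V3} : negT x ≠ .t ↔ x ≠ .f := by cases x <;> simp [negT]
theorem negT_eq_f {x : V3} : negT x = .f ↔ x = .t := by cases x <;> simp [negT]
theorem negT_eq_t {x : V3} : negT x = .t ↔ x = .f := by cases x <;> simp [negT]

/-- the describing formula for value `v` of formula `P` -/
def Dform (v : V3) (P : Fml α) : Fml α :=
  match v with
  | .t => P.neg.imp .bot
  | .f => P.imp .bot
  | .b => P.conj P.neg

/-- Kalmár's lemma -/
theorem kal (σ : α → V3) (hΓ : ∀ p : α, Dform (σ p) (Fml.var p) ∈ Γ) (A : Fml α) :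
    (eval σ A ≠ .f → Hilb Γ A) ∧ (eval σ A ≠ .t → Hilb Γ A.neg) ∧
    (eval σ A = .f → Hilb Γ (A.imp .bot)) ∧ (eval σ A = .t → Hilb Γ (A.neg.imp .bot)) := by
  induction A with
  | var p =>
    have hd := Hilb.hyp (hΓ p)
    cases h : σ p <;> rw [h] at hd <;> simp only [eval, h, Dform] at hd ⊢
    · exact ⟨fun _ => ofNegImpBot hd, by simp, by simp, fun _ => hd⟩
    · exact ⟨by simp, fun _ => negI hd, fun _ => hd, by simp⟩
    · exact ⟨fun _ => (Hilb.ax5 _ _).mp hd, fun _ => (Hilb.ax6 _ _).mp hd, by simp, by simp⟩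
  | bot =>
    exact ⟨by simp [eval], fun _ => topI, fun _ => hid _, by simp [eval]⟩
  | neg B ihB =>
    obtain ⟨i1, i2, i3, i4⟩ := ihB
    refine ⟨?_, ?_, ?_, ?_⟩ <;> simp only [eval, negT_ne_f, negT_ne_t, negT_eq_f, negT_eq_t] <;>
      intro h
    · exact i2 h
    · exact dni (i1 h)
    · exact i4 h
    · exact comp (iffFwd (Hilb.ax11 B)) (i3 h)
  | conj B C ihB ihC =>
    obtain ⟨b1, b2, b3, b4⟩ := ihB
    obtain ⟨c1, c2, c3, c4⟩ := ihC
    refine ⟨?_, ?_, ?_, ?_⟩ <;>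
      simp only [eval, conjT_ne_f, conjT_ne_t, conjT_eq_f, conjT_eq_t] <;> intro h
    · exact conjI (b1 h.1) (c1 h.2)
    · refine (iffBwd (Hilb.ax13 B C)).mp ?_
      rcases h with h | h
      · exact (Hilb.ax8 _ _).mp (b2 h)
      · exact (Hilb.ax9 _ _).mp (c2 h)
    · rcases h with h | h
      · exact comp (Hilb.ax5 B C) (b3 h)
      · exact comp (Hilb.ax6 B C) (c3 h)
    · exact comp (iffFwd (Hilb.ax13 B C)) (disjE (b4 h.1) (c4 h.2))
  | disj B C ihB ihC =>
    obtain ⟨b1, b2, b3, b4⟩ := ihB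
    obtain ⟨c1, c2, c3, c4⟩ := ihC
    refine ⟨?_, ?_, ?_, ?_⟩ <;>
      simp only [eval, disjT_ne_f, disjT_ne_t, disjT_eq_f, disjT_eq_t] <;> intro h
    · rcases h with h | h
      · exact (Hilb.ax8 _ _).mp (b1 h)
      · exact (Hilb.ax9 _ _).mp (c1 h)
    · exact (iffBwd (Hilb.ax14 B C)).mp (conjI (b2 h.1) (c2 h.2))
    · exact disjE (b3 h.1) (c3 h.2)
    · refine comp (iffFwd (Hilb.ax14 B C)) ?_
      rcases h with h | h
      · exact comp (Hilb.ax5 _ _) (b4 h)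
      · exact comp (Hilb.ax6 _ _) (c4 h)
  | imp B C ihB ihC =>
    obtain ⟨b1, b2, b3, b4⟩ := ihB
    obtain ⟨c1, c2, c3, c4⟩ := ihC
    refine ⟨?_, ?_, ?_, ?_⟩ <;>
      simp only [eval, impT_ne_f, impT_ne_t, impT_eq_f, impT_eq_t] <;> intro h
    · rcases h with h | h
      · exact comp (b3 h) (Hilb.ax4 C)
      · exact (Hilb.ax1 C B).mp (c1 h)
    · exact (iffBwd (Hilb.ax12 B C)).mp (conjI (b1 h.1) (c2 h.2))
    · exact comp (impApp (b1 h.1)) (c3 h.2)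
    · refine comp (iffFwd (Hilb.ax12 B C)) ?_
      rcases h with h | h
      · exact comp (Hilb.ax5 _ _) (b3 h)
      · exact comp (Hilb.ax6 _ _) (c4 h)

/-- totality of the three describing formulas -/
theorem descTotal (P : Fml α) :
    Hilb Γ ((Dform .t P).disj ((Dform .f P).disj (Dform .b P))) := by
  set G := (Dform .t P).disj ((Dform .f P).disj (Dform .b P)) with hG
  have hF : Hilb Γ ((P.imp .bot).imp G) :=
    comp (Hilb.ax8 (P.imp .bot) (P.conj P.neg)) (Hilb.ax9 _ _)
  have hB : ∀ {Γ' : Set (Fml α)}, Hilb Γ' (P.conj P.neg) → Hilb Γ' G := fun h =>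
    (Hilb.ax9 _ _).mp ((Hilb.ax9 _ _).mp h)
  have hP : Hilb Γ (P.imp G) := by
    apply deduction
    refine (disjE ?_ (Hilb.ax8 _ _)).mp (lemImp P.neg)
    apply deduction
    exact hB (conjI (.hyp (Set.mem_insert_of_mem _ (Set.mem_insert _ _)))
      (.hyp (Set.mem_insert _ _)))
  exact (disjE hP (comp (hid _) hF)).mp (lemImp P)

end LPProof
namespace LPProof

variable {α : Type}

/-- hypotheses describing the variables in `s` under valuation `σ` -/
def Gam (σ : α → V3) (s : Finset α) : Set (Fml α) :=
  {f | ∃ p ∈ s, f = Dform (σ p) (Fml.var p)}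

theorem Gam_empty (σ : α → V3) : Gam σ (∅ : Finset α) = ∅ := by
  ext f; simp [Gam]

theorem Gam_insert [DecidableEq α] {σ : α → V3} {s : Finset α} {p : α} (hp : p ∉ s) (v : V3) :
    Gam (Function.update σ p v) (insert p s) =
      insert (Dform v (Fml.var p)) (Gam σ s) := by
  ext f
  simp only [Gam, Set.mem_setOf_eq, Finset.mem_insert, Set.mem_insert_iff]
  constructor
  · rintro ⟨q, hq | hq, rfl⟩
    · subst hq; simp [Function.update_self]
    · right
      refine ⟨q, hq, ?_⟩
      rw [Function.update_of_ne (by rintro rfl; exact hp hq)]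
  · rintro (rfl | ⟨q, hq, rfl⟩)
    · exact ⟨p, Or.inl rfl, by simp [Function.update_self]⟩
    · refine ⟨q, Or.inr hq, ?_⟩
      rw [Function.update_of_ne (by rintro rfl; exact hp hq)]

theorem elimVars {A : Fml α} :
    ∀ s : Finset α, (∀ σ : α → V3, Hilb (Gam σ s) A) → Hilb (∅ : Set (Fml α)) A := by
  intro s
  haveI := Classical.decEq α
  induction s using Finset.induction_on with
  | empty => intro h; have := h (fun _ => .t); rwa [Gam_empty] at this
  | @insert p s hp ih =>
    intro h
    apply ih
    intro σ
    have hv : ∀ v : V3, Hilb (Gam σ s) ((Dform v (Fml.var p)).imp A) := by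
      intro v
      have := h (Function.update σ p v)
      rw [Gam_insert hp v] at this
      · exact deduction this
    have hd := disjE (hv .t) (disjE (hv .f) (hv .b))
    exact hd.mp (descTotal (Fml.var p))

/-- Completeness of the Hilbert system of LP→⊥. -/
theorem complete [Fintype α] {A : Fml α} (h : ∀ σ : α → V3, eval σ A ≠ .f) :
    Hilb (∅ : Set (Fml α)) A := by
  apply elimVars Finset.univ
  intro σ
  exact (kal (Γ := Gam σ Finset.univ) σ (fun p => ⟨p, Finset.mem_univ p, rfl⟩) A).1 (h σ)

/-- Completeness-based version of the IMP rule. -/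
theorem propEq_of_feq [Fintype α] {φ ψ : Fml α} (h : FEquiv φ ψ) : PropEq φ ψ := by
  apply PropEq.imp
  apply complete
  intro σ
  have hσ := h σ
  simp only [InternEq, Fml.iff', eval, hσ]
  cases eval σ ψ <;> simp [conjT, impT, negT]

theorem propEq_bot [Fintype α] {φ : Fml α} (h : EqBot φ) : PropEq φ .bot :=
  propEq_of_feq (fun σ => h σ)

end LPProof
namespace LPProof

set_option linter.unusedSectionVars false
variable {α Act : Type} [Fintype α] {γ : Option Act → Option Act → Option Act}

theorem top_not_bot : ¬ EqBot (Fml.top : Fml α) := fun h => by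
  have := h (fun _ => .t)
  simp [Fml.top, eval, negT] at this

/-- `p` is derivably equal to a basic term -/
def Good (γ : Option Act → Option Act → Option Act) (p : APT α Act) : Prop :=
  ∃ q, ABasic q ∧ ADeriv γ p q

theorem good_of_deriv {p q : APT α Act} (h : ADeriv γ p q) (hq : Good γ q) :
    Good γ p := by
  obtain ⟨r, hr, hd⟩ := hq
  exact ⟨r, hr, h.trans hd⟩

theorem good_basic {p : APT α Act} (h : ABasic p) : Good γ p := ⟨p, h, .refl p⟩

theorem good_alt {p q : APT α Act} (hp : Good γ p) (hq : Good γ q) :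
    Good γ (.alt p q) := by
  obtain ⟨r, hr, hdr⟩ := hp
  obtain ⟨s, hs, hds⟩ := hq
  exact ⟨.alt r s, .alt hr hs, .altC hdr hds⟩

theorem good_nex : Good γ (.nex : APT α Act) := good_basic .nex

theorem good_delta : Good γ (.delta : APT α Act) :=
  good_of_deriv (ADeriv.SE1 .delta).symm (good_basic (.emiDelta top_not_bot))

theorem good_act (a : Act) : Good γ (.act a : APT α Act) :=
  good_of_deriv (ADeriv.GC1 (.act a)).symm (good_basic (.gcAct a top_not_bot))

theorem good_se_delta (ψ : Fml α) : Good γ (.se ψ .delta : APT α Act) := by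
  by_cases h : EqBot ψ
  · exact good_of_deriv ((ADeriv.seC (propEq_bot h) (.refl _)).trans (ADeriv.SE2 _))
      good_nex
  · exact good_basic (.emiDelta h)

theorem good_gc_act (ψ : Fml α) (a : Act) : Good γ (.gc ψ (.act a) : APT α Act) := by
  by_cases h : EqBot ψ
  · exact good_of_deriv ((ADeriv.gcC (propEq_bot h) (.refl _)).trans (ADeriv.GC2 _))
      good_delta
  · exact good_basic (.gcAct a h)

theorem good_gc_seqact (ψ : Fml α) (a : Act) {x : APT α Act} (hx : ABasic x) :
    Good γ (.gc ψ (.seq (.act a) x)) := by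
  by_cases h : EqBot ψ
  · exact good_of_deriv ((ADeriv.gcC (propEq_bot h) (.refl _)).trans (ADeriv.GC2 _))
      good_delta
  · exact good_basic (.gcSeq a h hx)

theorem good_seq_act (a : Act) {x : APT α Act} (hx : ABasic x) :
    Good γ (.seq (.act a) x) :=
  good_of_deriv (ADeriv.GC1 _).symm (good_basic (.gcSeq a top_not_bot hx))

theorem good_actd (o : Option Act) : Good γ (actd o : APT α Act) := by
  cases o with
  | none => exact good_delta
  | some a => exact good_act a

theorem good_seq_actd (o : Option Act) {x : APT α Act} (hx : ABasic x) :
    Good γ (.seq (actd o) x) := by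
  cases o with
  | none => exact good_of_deriv (ADeriv.A7 x) good_delta
  | some a => exact good_seq_act a hx

theorem se_decomp (ψ : Fml α) (p : APT α Act) :
    ADeriv γ (.se ψ p) (.alt (.se ψ .delta) p) :=
  (ADeriv.seC (PropEq.refl ψ)
      ((ADeriv.trans (ADeriv.A1 .delta p) (ADeriv.A6 p)).symm)).trans
    (ADeriv.SE4 ψ .delta p).symm

theorem se_good (ψ : Fml α) {p : APT α Act} (hp : ABasic p) : Good γ (.se ψ p) :=
  good_of_deriv (se_decomp ψ p) (good_alt (good_se_delta ψ) (good_basic hp))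

theorem good_se (ψ : Fml α) {p : APT α Act} (h : Good γ p) : Good γ (.se ψ p) := by
  obtain ⟨r, hr, hd⟩ := h
  exact good_of_deriv (ADeriv.seC (PropEq.refl ψ) hd) (se_good ψ hr)

theorem gc_good (ψ : Fml α) {p : APT α Act} (hp : ABasic p) : Good γ (.gc ψ p) := by
  induction hp with
  | nex =>
    refine good_of_deriv (ADeriv.trans ?_ ((ADeriv.SE8 ψ .bot .delta).trans
      (ADeriv.seC (PropEq.refl _) (ADeriv.GC3 ψ)))) (good_se_delta _)
    exact ADeriv.gcC (PropEq.refl ψ) (ADeriv.SE2 .delta).symm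
  | @emiDelta φ hφ =>
    exact good_of_deriv ((ADeriv.SE8 ψ φ .delta).trans
      (ADeriv.seC (PropEq.refl _) (ADeriv.GC3 ψ))) (good_se_delta _)
  | @gcAct φ a hφ =>
    exact good_of_deriv (ADeriv.GC6 ψ φ _) (good_gc_act _ a)
  | @gcSeq φ a x hφ hx ih =>
    exact good_of_deriv (ADeriv.GC6 ψ φ _) (good_gc_seqact _ a hx)
  | @alt p1 p2 h1 h2 ih1 ih2 =>
    exact good_of_deriv (ADeriv.GC4 ψ p1 p2) (good_alt ih1 ih2)

theorem good_gc (ψ : Fml α) {p : APT α Act} (h : Good γ p) : Good γ (.gc ψ p) := by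
  obtain ⟨r, hr, hd⟩ := h
  exact good_of_deriv (ADeriv.gcC (PropEq.refl ψ) hd) (gc_good ψ hr)

theorem encap_good (H : Set Act) {p : APT α Act} (hp : ABasic p) :
    Good γ (.encap H p) := by
  induction hp with
  | nex =>
    refine good_of_deriv (ADeriv.trans ?_ ((ADeriv.SE12 H .bot .delta).trans
      (ADeriv.SE2 _))) good_nex
    exact ADeriv.encapC H (ADeriv.SE2 .delta).symm
  | @emiDelta φ hφ =>
    exact good_of_deriv ((ADeriv.SE12 H φ .delta).trans
      (ADeriv.seC (PropEq.refl φ) (ADeriv.D1d H))) (good_se_delta φ)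
  | @gcAct φ a hφ =>
    by_cases h : a ∈ H
    · exact good_of_deriv ((ADeriv.GC11 H φ _).trans
        ((ADeriv.gcC (PropEq.refl φ) (ADeriv.D2 H a h)).trans (ADeriv.GC3 φ)))
        good_delta
    · exact good_of_deriv ((ADeriv.GC11 H φ _).trans
        (ADeriv.gcC (PropEq.refl φ) (ADeriv.D1 H a h))) (good_gc_act φ a)
  | @gcSeq φ a x hφ hx ih =>
    obtain ⟨r, hr, hd⟩ := ih
    by_cases h : a ∈ H
    · refine good_of_deriv ((ADeriv.GC11 H φ _).trans
        ((ADeriv.gcC (PropEq.refl φ) ((ADeriv.D4 H _ _).trans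
          ((ADeriv.seqC (ADeriv.D2 H a h) hd).trans (ADeriv.A7 r)))).trans
        (ADeriv.GC3 φ))) good_delta
    · exact good_of_deriv ((ADeriv.GC11 H φ _).trans
        (ADeriv.gcC (PropEq.refl φ) ((ADeriv.D4 H _ _).trans
          (ADeriv.seqC (ADeriv.D1 H a h) hd)))) (good_gc_seqact φ a hr)
  | @alt p1 p2 h1 h2 ih1 ih2 =>
    exact good_of_deriv (ADeriv.D3 H p1 p2) (good_alt ih1 ih2)

theorem good_encap (H : Set Act) {p : APT α Act} (h : Good γ p) :
    Good γ (.encap H p) := by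
  obtain ⟨r, hr, hd⟩ := h
  exact good_of_deriv (ADeriv.encapC H hd) (encap_good H hr)

theorem seq_good {p q : APT α Act} (hp : ABasic p) (hq : ABasic q) :
    Good γ (.seq p q) := by
  induction hp with
  | nex => exact good_of_deriv (ADeriv.NE2 q) good_nex
  | @emiDelta φ hφ =>
    exact good_of_deriv ((ADeriv.SE5 φ .delta q).trans
      (ADeriv.seC (PropEq.refl φ) (ADeriv.A7 q))) (good_se_delta φ)
  | @gcAct φ a hφ =>
    exact good_of_deriv (ADeriv.GC5 φ (.act a) q).symm (good_gc_seqact φ a hq)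
  | @gcSeq φ a x hφ hx ih =>
    obtain ⟨r, hr, hd⟩ := ih
    exact good_of_deriv ((ADeriv.GC5 φ _ q).symm.trans
      ((ADeriv.gcC (PropEq.refl φ) (ADeriv.A5 (.act a) x q)).trans
        (ADeriv.gcC (PropEq.refl φ) (ADeriv.seqC (ADeriv.refl (.act a)) hd))))
      (good_gc_seqact φ a hr)
  | @alt p1 p2 h1 h2 ih1 ih2 =>
    exact good_of_deriv (ADeriv.A4 p1 p2 q) (good_alt ih1 ih2)

theorem good_seq {p q : APT α Act} (hp : Good γ p) (hq : Good γ q) :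
    Good γ (.seq p q) := by
  obtain ⟨r, hr, hdr⟩ := hp
  obtain ⟨s, hs, hds⟩ := hq
  exact good_of_deriv (ADeriv.seqC hdr hds) (seq_good hr hs)

end LPProof
namespace LPProof

set_option linter.unusedSectionVars false

variable {α Act : Type} [Fintype α] {γ : Option Act → Option Act → Option Act}

theorem cm_delta (hδ : ∀ a, γ none a = none) {q : APT α Act} (hq : ABasic q) :
    Good γ (.cm .delta q) := by
  have hcf : ADeriv γ (.cm (.delta : APT α Act) .delta) (.delta : APT α Act) := by
    have h := ADeriv.CF (γ := γ) (α := α) none none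
    rwa [hδ none] at h
  induction hq with
  | nex =>
    exact good_of_deriv ((ADeriv.cmC (ADeriv.refl .delta) (ADeriv.SE2 .delta).symm).trans
      ((ADeriv.SE11 .bot .delta .delta).trans (ADeriv.SE2 _))) good_nex
  | @emiDelta ψ hψ =>
    exact good_of_deriv ((ADeriv.SE11 ψ .delta .delta).trans
      (ADeriv.seC (PropEq.refl ψ) hcf)) (good_se_delta ψ)
  | @gcAct ψ b hψ =>
    have h1 : ADeriv γ (.cm (.delta : APT α Act) (.act b)) .delta := by
      have h := ADeriv.CF (γ := γ) (α := α) none (some b)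
      rwa [hδ (some b)] at h
    refine good_of_deriv ((ADeriv.GC10S ψ .delta (.act b)).trans
      ((ADeriv.altC ((ADeriv.gcC (PropEq.refl ψ) h1).trans (ADeriv.GC3 ψ))
        (ADeriv.D1d _)).trans (ADeriv.A3 .delta))) good_delta
  | @gcSeq ψ b y hψ hy ih =>
    have h1 : ADeriv γ (.cm (.delta : APT α Act) (.seq (.act b) y)) .delta := by
      have h := ADeriv.CM6 (γ := γ) (α := α) none (some b) y
      rw [hδ (some b)] at h
      exact h.trans (ADeriv.A7 y)
    refine good_of_deriv ((ADeriv.GC10S ψ .delta (.seq (.act b) y)).trans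
      ((ADeriv.altC ((ADeriv.gcC (PropEq.refl ψ) h1).trans (ADeriv.GC3 ψ))
        (ADeriv.D1d _)).trans (ADeriv.A3 .delta))) good_delta
  | @alt q1 q2 h1 h2 ih1 ih2 =>
    exact good_of_deriv (ADeriv.CM9 .delta q1 q2) (good_alt ih1 ih2)

theorem cm_act (hcomm : ∀ a b, γ a b = γ b a) (hδ : ∀ a, γ none a = none)
    (a : Act) {q : APT α Act} (hq : ABasic q) : Good γ (.cm (.act a) q) := by
  induction hq with
  | nex =>
    exact good_of_deriv ((ADeriv.cmC (ADeriv.refl (.act a)) (ADeriv.SE2 .delta).symm).trans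
      ((ADeriv.SE11 .bot (.act a) .delta).trans (ADeriv.SE2 _))) good_nex
  | @emiDelta ψ hψ =>
    have h1 : ADeriv γ (.cm (.act a : APT α Act) .delta) .delta := by
      have h := ADeriv.CF (γ := γ) (α := α) (some a) none
      rwa [hcomm (some a) none, hδ (some a)] at h
    exact good_of_deriv ((ADeriv.SE11 ψ (.act a) .delta).trans
      (ADeriv.seC (PropEq.refl ψ) h1)) (good_se_delta ψ)
  | @gcAct ψ b hψ =>
    refine good_of_deriv (ADeriv.GC10S ψ (.act a) (.act b)) (good_alt ?_ ?_)
    · exact good_gc ψ (good_of_deriv (ADeriv.CF (some a) (some b))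
        (good_actd (γ (some a) (some b))))
    · exact good_of_deriv (ADeriv.D2 Set.univ a (Set.mem_univ a)) good_delta
  | @gcSeq ψ b y hψ hy ih =>
    refine good_of_deriv (ADeriv.GC10S ψ (.act a) (.seq (.act b) y)) (good_alt ?_ ?_)
    · exact good_gc ψ (good_of_deriv (ADeriv.CM6 (some a) (some b) y)
        (good_seq_actd (γ (some a) (some b)) hy))
    · exact good_of_deriv (ADeriv.D2 Set.univ a (Set.mem_univ a)) good_delta
  | @alt q1 q2 h1 h2 ih1 ih2 =>
    exact good_of_deriv (ADeriv.CM9 (.act a) q1 q2) (good_alt ih1 ih2)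

/-- structural size of a process term -/
def psize : APT α Act → ℕ
  | .act _ => 1
  | .delta => 1
  | .nex => 1
  | .alt p q => psize p + psize q + 1
  | .seq p q => psize p + psize q + 1
  | .par p q => psize p + psize q + 1
  | .lm p q => psize p + psize q + 1
  | .cm p q => psize p + psize q + 1
  | .gc _ p => psize p + 1
  | .se _ p => psize p + 1
  | .encap _ p => psize p + 1

theorem encap_univ_seq_act (a : Act) (x : APT α Act) :
    ADeriv γ (.encap Set.univ (.seq (.act a) x)) (.delta : APT α Act) :=
  (ADeriv.D4 Set.univ (.act a) x).trans
    ((ADeriv.seqC (ADeriv.D2 Set.univ a (Set.mem_univ a)) (ADeriv.refl _)).trans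
      (ADeriv.A7 _))

theorem merge_good (hcomm : ∀ a b, γ a b = γ b a) (hδ : ∀ a, γ none a = none) :
    ∀ n : ℕ, ∀ p q : APT α Act, ABasic p → ABasic q → psize p + psize q ≤ n →
      Good γ (.cm p q) ∧ Good γ (.lm p q) ∧ Good γ (.par p q) := by
  intro n
  induction n using Nat.strong_induction_on with
  | _ n IH =>
  have hpar_small : ∀ x y : APT α Act, ABasic x → ABasic y →
      psize x + psize y < n → Good γ (.par x y) :=
    fun x y hx hy hlt => (IH _ hlt x y hx hy le_rfl).2.2
  have hcmseq : ∀ (a : Act) (x : APT α Act), ABasic x → ∀ q, ABasic q →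
      psize x + psize q + 3 ≤ n → Good γ (.cm (.seq (.act a) x) q) := by
    intro a x hx q hq
    induction hq with
    | nex =>
      intro _
      exact good_of_deriv
        ((ADeriv.cmC (ADeriv.refl _) (ADeriv.SE2 .delta).symm).trans
          ((ADeriv.SE11 .bot _ .delta).trans (ADeriv.SE2 _))) good_nex
    | @emiDelta ψ hψ =>
      intro _
      have h1 : ADeriv γ (.cm (.seq (.act a) x) .delta) .delta := by
        have h := ADeriv.CM5 (γ := γ) (α := α) (some a) none x
        rw [hcomm (some a) none, hδ (some a)] at h
        exact h.trans (ADeriv.A7 x)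
      exact good_of_deriv ((ADeriv.SE11 ψ _ .delta).trans
        (ADeriv.seC (PropEq.refl ψ) h1)) (good_se_delta ψ)
    | @gcAct ψ b hψ =>
      intro _
      refine good_of_deriv (ADeriv.GC10S ψ _ (.act b)) (good_alt ?_ ?_)
      · exact good_gc ψ (good_of_deriv (ADeriv.CM5 (some a) (some b) x)
          (good_seq_actd (γ (some a) (some b)) hx))
      · exact good_of_deriv (encap_univ_seq_act a x) good_delta
    | @gcSeq ψ b y hψ hy ih =>
      intro hle
      refine good_of_deriv (ADeriv.GC10S ψ _ (.seq (.act b) y)) (good_alt ?_ ?_)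
      · obtain ⟨r, hr, hdr⟩ := hpar_small x y hx hy (by simp [psize] at hle ⊢; omega)
        refine good_gc ψ (good_of_deriv ((ADeriv.CM7 (some a) (some b) x y).trans
          (ADeriv.seqC (ADeriv.refl _) hdr)) (good_seq_actd (γ (some a) (some b)) hr))
      · exact good_of_deriv (encap_univ_seq_act a x) good_delta
    | @alt q1 q2 h1 h2 ih1 ih2 =>
      intro hle
      refine good_of_deriv (ADeriv.CM9 _ q1 q2)
        (good_alt (ih1 ?_) (ih2 ?_)) <;> simp [psize] at hle ⊢ <;> omega
  have hcm : ∀ p q : APT α Act, ABasic p → ABasic q → psize p + psize q ≤ n →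
      Good γ (.cm p q) := by
    intro p q hp hq
    induction hp with
    | nex =>
      intro _
      exact good_of_deriv ((ADeriv.cmC (ADeriv.SE2 .delta).symm (ADeriv.refl q)).trans
        ((ADeriv.SE10 .bot .delta q).trans (ADeriv.SE2 _))) good_nex
    | @emiDelta φ hφ =>
      intro _
      exact good_of_deriv (ADeriv.SE10 φ .delta q) (good_se φ (cm_delta hδ hq))
    | @gcAct φ a hφ =>
      intro _
      exact good_of_deriv (ADeriv.GC9S φ (.act a) q)
        (good_alt (good_gc φ (cm_act hcomm hδ a hq)) (encap_good Set.univ hq))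
    | @gcSeq φ a x hφ hx ih =>
      intro hle
      refine good_of_deriv (ADeriv.GC9S φ _ q)
        (good_alt (good_gc φ (hcmseq a x hx q hq ?_)) (encap_good Set.univ hq))
      simp [psize] at hle ⊢; omega
    | @alt p1 p2 h1 h2 ih1 ih2 =>
      intro hle
      refine good_of_deriv (ADeriv.CM8 p1 p2 q)
        (good_alt (ih1 ?_) (ih2 ?_)) <;> simp [psize] at hle ⊢ <;> omega
  have hlm : ∀ p q : APT α Act, ABasic p → ABasic q → psize p + psize q ≤ n →
      Good γ (.lm p q) := by
    intro p q hp hq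
    induction hp with
    | nex =>
      intro _
      exact good_of_deriv ((ADeriv.lmC (ADeriv.SE2 .delta).symm (ADeriv.refl q)).trans
        ((ADeriv.SE9 .bot .delta q).trans (ADeriv.SE2 _))) good_nex
    | @emiDelta φ hφ =>
      intro _
      have h1 : ADeriv γ (.lm (.delta : APT α Act) q) (.encap Set.univ q) :=
        (ADeriv.CM2S none q).trans ((ADeriv.altC (ADeriv.A7 q) (ADeriv.refl _)).trans
          ((ADeriv.A1 _ _).trans (ADeriv.A6 _)))
      exact good_of_deriv (ADeriv.SE9 φ .delta q)
        (good_se φ (good_of_deriv h1 (encap_good Set.univ hq)))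
    | @gcAct φ a hφ =>
      intro _
      refine good_of_deriv (ADeriv.GC8S φ (.act a) q) (good_alt ?_ (encap_good _ hq))
      exact good_gc φ (good_of_deriv (ADeriv.CM2S (some a) q)
        (good_alt (good_seq_act a hq) (encap_good Set.univ hq)))
    | @gcSeq φ a x hφ hx ih =>
      intro hle
      refine good_of_deriv (ADeriv.GC8S φ _ q) (good_alt ?_ (encap_good _ hq))
      obtain ⟨r, hr, hdr⟩ := hpar_small x q hx hq (by simp [psize] at hle ⊢; omega)
      exact good_gc φ (good_of_deriv ((ADeriv.CM3S (some a) x q).trans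
        (ADeriv.altC (ADeriv.seqC (ADeriv.refl _) hdr) (ADeriv.refl _)))
        (good_alt (good_seq_act a hr) (encap_good Set.univ hq)))
    | @alt p1 p2 h1 h2 ih1 ih2 =>
      intro hle
      refine good_of_deriv (ADeriv.CM4 p1 p2 q)
        (good_alt (ih1 ?_) (ih2 ?_)) <;> simp [psize] at hle ⊢ <;> omega
  refine fun p q hp hq hle => ⟨hcm p q hp hq hle, hlm p q hp hq hle, ?_⟩
  exact good_of_deriv (ADeriv.CM1 p q)
    (good_alt (good_alt (hlm p q hp hq hle) (hlm q p hq hp (by omega)))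
      (hcm p q hp hq hle))

end LPProof
/-- Elimination for ctACPps: every closed term is derivably equal to a basic term. -/
theorem ctACPps_elimination {α Act : Type} [Fintype α] [Fintype Act]
    (γ : Option Act → Option Act → Option Act)
    (hγcomm : ∀ a b, γ a b = γ b a)
    (hγassoc : ∀ a b c, γ (γ a b) c = γ a (γ b c))
    (hγdelta : ∀ a, γ none a = none)
    (p : APT α Act) :
    ∃ q : APT α Act, ABasic q ∧ ADeriv γ p q := by
  open LPProof in
  induction p with
  | act a => exact good_act a
  | delta => exact good_delta
  | nex => exact good_nex
  | alt p q ihp ihq => exact good_alt ihp ihq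
  | seq p q ihp ihq => exact good_seq ihp ihq
  | gc φ p ih => exact good_gc φ ih
  | se φ p ih => exact good_se φ ih
  | par p q ihp ihq =>
    obtain ⟨p', hp', dp⟩ := ihp
    obtain ⟨q', hq', dq⟩ := ihq
    exact good_of_deriv (ADeriv.parC dp dq)
      (merge_good hγcomm hγdelta (psize p' + psize q') p' q' hp' hq' le_rfl).2.2
  | lm p q ihp ihq =>
    obtain ⟨p', hp', dp⟩ := ihp
    obtain ⟨q', hq', dq⟩ := ihq
    exact good_of_deriv (ADeriv.lmC dp dq)
      (merge_good hγcomm hγdelta (psize p' + psize q') p' q' hp' hq' le_rfl).2.1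
  | cm p q ihp ihq =>
    obtain ⟨p', hp', dp⟩ := ihp
    obtain ⟨q', hq', dq⟩ := ihq
    exact good_of_deriv (ADeriv.cmC dp dq)
      (merge_good hγcomm hγdelta (psize p' + psize q') p' q' hp' hq' le_rfl).1
  | encap H p ih => exact good_encap H ih
end

section
/- Strong soundness and completeness of LP→⊥: for every set Γ of formulas of LP→⊥ and every formula A of LP→⊥, Γ ⊢ A (A is derivable from Γ in the Hilbert system of LP→⊥) if and only if Γ ⊨ A (semantic logical consequence in the three-valued semantics of LP→⊥). -/
set_option autoImplicit true
set_option maxHeartbeats 1000000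

instance inst_s16 : Fintype V3 :=
  ⟨{V3.t, V3.f, V3.b}, by intro x; cases x <;> simp⟩

namespace LPAux

open Fml

variable {α : Type}

/-! ### Soundness -/

theorem sound {Γ : Set (Fml α)} {A : Fml α} (h : Hilb Γ A) : SemCons Γ A := by
  induction h with
  | hyp hA => exact fun σ hσ => hσ _ hA
  | mp _ _ ih1 ih2 =>
    intro σ hσ
    exact (by decide : ∀ a b : V3, impT a b ≠ V3.f → a ≠ V3.f → b ≠ V3.f) _ _ (ih1 σ hσ) (ih2 σ hσ)
  | ax1 A B =>
    intro σ _
    exact (by decide : ∀ a b : V3, impT a (impT b a) ≠ V3.f) (eval σ A) (eval σ B)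
  | ax2 A B C =>
    intro σ _
    exact (by decide : ∀ a b c : V3,
                   impT (impT a (impT b c)) (impT (impT a b) (impT a c)) ≠ V3.f)
                   (eval σ A) (eval σ B) (eval σ C)
  | ax3 A B =>
    intro σ _
    exact (by decide : ∀ a b : V3, impT (impT (impT a b) a) a ≠ V3.f)
                 (eval σ A) (eval σ B)
  | ax4 A =>
    intro σ _
    exact (by decide : ∀ a : V3, impT V3.f a ≠ V3.f) (eval σ A)
  | ax5 A B =>
    intro σ _
    exact (by decide : ∀ a b : V3, impT (conjT a b) a ≠ V3.f) (eval σ A) (eval σ B)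
  | ax6 A B =>
    intro σ _
    exact (by decide : ∀ a b : V3, impT (conjT a b) b ≠ V3.f) (eval σ A) (eval σ B)
  | ax7 A B =>
    intro σ _
    exact (by decide : ∀ a b : V3, impT a (impT b (conjT a b)) ≠ V3.f)
                 (eval σ A) (eval σ B)
  | ax8 A B =>
    intro σ _
    exact (by decide : ∀ a b : V3, impT a (disjT a b) ≠ V3.f) (eval σ A) (eval σ B)
  | ax9 A B =>
    intro σ _
    exact (by decide : ∀ a b : V3, impT b (disjT a b) ≠ V3.f) (eval σ A) (eval σ B)
  | ax10 A B C =>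
    intro σ _
    exact (by decide : ∀ a b c : V3,
                    impT (impT a c) (impT (impT b c) (impT (disjT a b) c)) ≠ V3.f)
                    (eval σ A) (eval σ B) (eval σ C)
  | ax11 A =>
    intro σ _
    exact (by decide : ∀ a : V3,
                conjT (impT (negT (negT a)) a) (impT a (negT (negT a))) ≠ V3.f) (eval σ A)
  | ax12 A B =>
    intro σ _
    exact (by decide : ∀ a b : V3,
                  conjT (impT (negT (impT a b)) (conjT a (negT b)))
                        (impT (conjT a (negT b)) (negT (impT a b))) ≠ V3.f)
                  (eval σ A) (eval σ B)
  | ax13 A B =>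
    intro σ _
    exact (by decide : ∀ a b : V3,
                  conjT (impT (negT (conjT a b)) (disjT (negT a) (negT b)))
                        (impT (disjT (negT a) (negT b)) (negT (conjT a b))) ≠ V3.f)
                  (eval σ A) (eval σ B)
  | ax14 A B =>
    intro σ _
    exact (by decide : ∀ a b : V3,
                  conjT (impT (negT (disjT a b)) (conjT (negT a) (negT b)))
                        (impT (conjT (negT a) (negT b)) (negT (disjT a b))) ≠ V3.f)
                  (eval σ A) (eval σ B)
  | ax15 A =>
    intro σ _
    exact (by decide : ∀ a : V3, disjT a (negT a) ≠ V3.f) (eval σ A)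

/-! ### Basic proof theory -/

theorem _root_.Hilb.mono {Γ Δ : Set (Fml α)} (h : Γ ⊆ Δ) {A : Fml α} (d : Hilb Γ A) : Hilb Δ A := by
  induction d with
  | hyp hA => exact Hilb.hyp (h hA)
  | mp _ _ ih1 ih2 => exact Hilb.mp ih1 ih2
  | ax1 A B => exact Hilb.ax1 A B
  | ax2 A B C => exact Hilb.ax2 A B C
  | ax3 A B => exact Hilb.ax3 A B
  | ax4 A => exact Hilb.ax4 A
  | ax5 A B => exact Hilb.ax5 A B
  | ax6 A B => exact Hilb.ax6 A B
  | ax7 A B => exact Hilb.ax7 A B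
  | ax8 A B => exact Hilb.ax8 A B
  | ax9 A B => exact Hilb.ax9 A B
  | ax10 A B C => exact Hilb.ax10 A B C
  | ax11 A => exact Hilb.ax11 A
  | ax12 A B => exact Hilb.ax12 A B
  | ax13 A B => exact Hilb.ax13 A B
  | ax14 A B => exact Hilb.ax14 A B
  | ax15 A => exact Hilb.ax15 A

theorem imp_self' (Γ : Set (Fml α)) (A : Fml α) : Hilb Γ (A.imp A) :=
  Hilb.mp (Hilb.mp (Hilb.ax2 A (A.imp A) A) (Hilb.ax1 A (A.imp A))) (Hilb.ax1 A A)

theorem weaken1 {Γ : Set (Fml α)} {C : Fml α} (B : Fml α) (h : Hilb Γ C) :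
    Hilb Γ (B.imp C) := Hilb.mp (Hilb.ax1 C B) h

/-- Deduction theorem. -/
theorem deduction {Γ : Set (Fml α)} {B A : Fml α}
    (h : Hilb (insert B Γ) A) : Hilb Γ (B.imp A) := by
  induction h with
  | hyp hA =>
    rcases hA with rfl | hA
    · exact imp_self' Γ _
    · exact weaken1 _ (Hilb.hyp hA)
  | mp _ _ ih1 ih2 => exact Hilb.mp (Hilb.mp (Hilb.ax2 _ _ _) ih1) ih2
  | ax1 A B => exact weaken1 _ (Hilb.ax1 A B)
  | ax2 A B C => exact weaken1 _ (Hilb.ax2 A B C)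
  | ax3 A B => exact weaken1 _ (Hilb.ax3 A B)
  | ax4 A => exact weaken1 _ (Hilb.ax4 A)
  | ax5 A B => exact weaken1 _ (Hilb.ax5 A B)
  | ax6 A B => exact weaken1 _ (Hilb.ax6 A B)
  | ax7 A B => exact weaken1 _ (Hilb.ax7 A B)
  | ax8 A B => exact weaken1 _ (Hilb.ax8 A B)
  | ax9 A B => exact weaken1 _ (Hilb.ax9 A B)
  | ax10 A B C => exact weaken1 _ (Hilb.ax10 A B C)
  | ax11 A => exact weaken1 _ (Hilb.ax11 A)
  | ax12 A B => exact weaken1 _ (Hilb.ax12 A B)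
  | ax13 A B => exact weaken1 _ (Hilb.ax13 A B)
  | ax14 A B => exact weaken1 _ (Hilb.ax14 A B)
  | ax15 A => exact weaken1 _ (Hilb.ax15 A)

theorem cut {Γ : Set (Fml α)} {B A : Fml α} (hB : Hilb Γ B)
    (h : Hilb (insert B Γ) A) : Hilb Γ A := Hilb.mp (deduction h) hB

/-- Compactness: every derivation uses only finitely many hypotheses. -/
theorem compact {Γ : Set (Fml α)} {A : Fml α} (h : Hilb Γ A) :
    ∃ Γ₀ : Finset (Fml α), ↑Γ₀ ⊆ Γ ∧ Hilb (↑Γ₀ : Set (Fml α)) A := by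
  classical
  induction h with
  | hyp hA => exact ⟨{_}, by simpa using hA, Hilb.hyp (by simp)⟩
  | mp _ _ ih1 ih2 =>
    obtain ⟨S1, hS1, d1⟩ := ih1
    obtain ⟨S2, hS2, d2⟩ := ih2
    refine ⟨S1 ∪ S2, ?_, Hilb.mp (d1.mono ?_) (d2.mono ?_)⟩
    · intro x hx
      simp only [Finset.coe_union, Set.mem_union] at hx
      exact hx.elim (fun h => hS1 h) (fun h => hS2 h)
    · intro x hx; simp only [Finset.coe_union, Set.mem_union]; exact Or.inl hx
    · intro x hx; simp only [Finset.coe_union, Set.mem_union]; exact Or.inr hx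
  | ax1 A B => exact ⟨∅, by simp, Hilb.ax1 A B⟩
  | ax2 A B C => exact ⟨∅, by simp, Hilb.ax2 A B C⟩
  | ax3 A B => exact ⟨∅, by simp, Hilb.ax3 A B⟩
  | ax4 A => exact ⟨∅, by simp, Hilb.ax4 A⟩
  | ax5 A B => exact ⟨∅, by simp, Hilb.ax5 A B⟩
  | ax6 A B => exact ⟨∅, by simp, Hilb.ax6 A B⟩
  | ax7 A B => exact ⟨∅, by simp, Hilb.ax7 A B⟩
  | ax8 A B => exact ⟨∅, by simp, Hilb.ax8 A B⟩
  | ax9 A B => exact ⟨∅, by simp, Hilb.ax9 A B⟩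
  | ax10 A B C => exact ⟨∅, by simp, Hilb.ax10 A B C⟩
  | ax11 A => exact ⟨∅, by simp, Hilb.ax11 A⟩
  | ax12 A B => exact ⟨∅, by simp, Hilb.ax12 A B⟩
  | ax13 A B => exact ⟨∅, by simp, Hilb.ax13 A B⟩
  | ax14 A B => exact ⟨∅, by simp, Hilb.ax14 A B⟩
  | ax15 A => exact ⟨∅, by simp, Hilb.ax15 A⟩

/-! ### Lindenbaum -/

theorem lindenbaum {Γ : Set (Fml α)} {A : Fml α} (h : ¬ Hilb Γ A) :
    ∃ Δ : Set (Fml α), Γ ⊆ Δ ∧ ¬ Hilb Δ A ∧ ∀ B ∉ Δ, Hilb (insert B Δ) A := by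
  have hch : ∀ c ⊆ {Δ : Set (Fml α) | ¬ Hilb Δ A}, IsChain (· ⊆ ·) c → c.Nonempty →
      ∃ ub ∈ {Δ : Set (Fml α) | ¬ Hilb Δ A}, ∀ s ∈ c, s ⊆ ub := by
    intro c hc hchain hne
    refine ⟨⋃₀ c, ?_, fun s hs => Set.subset_sUnion_of_mem hs⟩
    intro hU
    obtain ⟨S, hS, dS⟩ := compact hU
    rw [Set.sUnion_eq_biUnion] at hS
    obtain ⟨t, htc, hSt⟩ :=
      (hchain.directedOn).exists_mem_subset_of_finset_subset_biUnion hne hS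
    exact hc htc (dS.mono hSt)
  obtain ⟨Δ, hsub, hΔ, hmax⟩ :=
    zorn_subset_nonempty {Δ : Set (Fml α) | ¬ Hilb Δ A} hch Γ h
  refine ⟨Δ, hsub, hΔ, fun B hB => ?_⟩
  by_contra hcon
  have : insert B Δ ⊆ Δ := hmax hcon (Set.subset_insert B Δ)
  exact hB (this (Set.mem_insert B Δ))

/-! ### Properties of maximal theories -/

variable {Δ : Set (Fml α)} {A : Fml α}

section Max

variable (hA : ¬ Hilb Δ A) (hm : ∀ B ∉ Δ, Hilb (insert B Δ) A)

include hA hm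

theorem closed {B : Fml α} (h : Hilb Δ B) : B ∈ Δ := by
  by_contra hB
  exact hA (cut h (hm B hB))

theorem prime {B C : Fml α} (h : (B.disj C) ∈ Δ) : B ∈ Δ ∨ C ∈ Δ := by
  by_contra hcon
  push_neg at hcon
  have d1 : Hilb Δ (B.imp A) := deduction (hm B hcon.1)
  have d2 : Hilb Δ (C.imp A) := deduction (hm C hcon.2)
  exact hA (Hilb.mp (Hilb.mp (Hilb.mp (Hilb.ax10 B C A) d1) d2) (Hilb.hyp h))

theorem em_mem (B : Fml α) : B ∈ Δ ∨ B.neg ∈ Δ :=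
  prime hA hm (closed hA hm (Hilb.ax15 B))

omit hm in
theorem bot_not_mem : Fml.bot ∉ Δ := fun h =>
  hA (Hilb.mp (Hilb.ax4 A) (Hilb.hyp h))

theorem iff_mem {P Q : Fml α} (h : Hilb Δ (Fml.iff' P Q)) : P ∈ Δ ↔ Q ∈ Δ := by
  constructor
  · intro hP
    exact closed hA hm (Hilb.mp (Hilb.mp (Hilb.ax5 _ _) h) (Hilb.hyp hP))
  · intro hQ
    exact closed hA hm (Hilb.mp (Hilb.mp (Hilb.ax6 _ _) h) (Hilb.hyp hQ))

theorem conj_mem {B C : Fml α} : (B.conj C) ∈ Δ ↔ B ∈ Δ ∧ C ∈ Δ := by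
  constructor
  · intro h
    exact ⟨closed hA hm (Hilb.mp (Hilb.ax5 B C) (Hilb.hyp h)),
           closed hA hm (Hilb.mp (Hilb.ax6 B C) (Hilb.hyp h))⟩
  · rintro ⟨hB, hC⟩
    exact closed hA hm (Hilb.mp (Hilb.mp (Hilb.ax7 B C) (Hilb.hyp hB)) (Hilb.hyp hC))

theorem disj_mem {B C : Fml α} : (B.disj C) ∈ Δ ↔ B ∈ Δ ∨ C ∈ Δ := by
  constructor
  · exact prime hA hm
  · rintro (hB | hC)
    · exact closed hA hm (Hilb.mp (Hilb.ax8 B C) (Hilb.hyp hB))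
    · exact closed hA hm (Hilb.mp (Hilb.ax9 B C) (Hilb.hyp hC))

theorem imp_mem {B C : Fml α} : (B.imp C) ∈ Δ ↔ (B ∉ Δ ∨ C ∈ Δ) := by
  constructor
  · intro h
    by_cases hB : B ∈ Δ
    · exact Or.inr (closed hA hm (Hilb.mp (Hilb.hyp h) (Hilb.hyp hB)))
    · exact Or.inl hB
  · rintro (hB | hC)
    · -- B ∉ Δ: derive B → C using Peirce and ⊥
      apply closed hA hm
      by_contra hnc
      have hncm : (B.imp C) ∉ Δ := fun hmem => hnc (Hilb.hyp hmem)
      have d1 : Hilb Δ ((B.imp C).imp A) := deduction (hm _ hncm)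
      have d2 : Hilb Δ (B.imp A) := deduction (hm B hB)
      -- work in Γ1 = insert (A → ⊥) Δ
      have s1 : Δ ⊆ insert (A.imp Fml.bot) Δ := Set.subset_insert _ _
      have s2 : insert (A.imp Fml.bot) Δ ⊆ insert B (insert (A.imp Fml.bot) Δ) :=
        Set.subset_insert _ _
      have a1 : Hilb (insert B (insert (A.imp Fml.bot) Δ)) A :=
        Hilb.mp (d2.mono (s1.trans s2)) (Hilb.hyp (Set.mem_insert _ _))
      have a2 : Hilb (insert B (insert (A.imp Fml.bot) Δ)) Fml.bot :=
        Hilb.mp (Hilb.hyp (s2 (Set.mem_insert _ _))) a1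
      have a3 : Hilb (insert B (insert (A.imp Fml.bot) Δ)) C :=
        Hilb.mp (Hilb.ax4 C) a2
      have a4 : Hilb (insert (A.imp Fml.bot) Δ) (B.imp C) := deduction a3
      have a5 : Hilb (insert (A.imp Fml.bot) Δ) A := Hilb.mp (d1.mono s1) a4
      have a6 : Hilb Δ ((A.imp Fml.bot).imp A) := deduction a5
      exact hA (Hilb.mp (Hilb.ax3 A Fml.bot) a6)
    · exact closed hA hm (weaken1 B (Hilb.hyp hC))

end Max

/-! ### Canonical valuation and truth lemma -/

noncomputable def canon (Δ : Set (Fml α)) : α → V3 := fun x =>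
  open Classical in
  if Fml.var x ∈ Δ then (if (Fml.var x).neg ∈ Δ then V3.b else V3.t) else V3.f

theorem truth (hA : ¬ Hilb Δ A) (hm : ∀ B ∉ Δ, Hilb (insert B Δ) A) :
    ∀ C : Fml α,
      (C ∈ Δ ↔ eval (canon Δ) C ≠ V3.f) ∧ (C.neg ∈ Δ ↔ eval (canon Δ) C ≠ V3.t) := by
  intro C
  induction C with
  | var x =>
    constructor
    · constructor
      · intro h
        simp only [eval, canon, if_pos h]
        split <;> simp
      · intro h
        by_contra hx
        simp [eval, canon, if_neg hx] at h
    · constructor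
      · intro h
        by_cases hx : Fml.var x ∈ Δ
        · simp [eval, canon, if_pos hx, if_pos h]
        · simp [eval, canon, if_neg hx]
      · intro h
        by_cases hx : Fml.var x ∈ Δ
        · by_cases hnx : (Fml.var x).neg ∈ Δ
          · exact hnx
          · exfalso; apply h; simp [eval, canon, if_pos hx, if_neg hnx]
        · exact (em_mem hA hm (Fml.var x)).resolve_left hx
  | bot =>
    constructor
    · simp only [eval, ne_eq, not_true_eq_false, iff_false]
      exact bot_not_mem hA
    · simp only [eval, ne_eq]
      refine ⟨fun _ => by simp, fun _ => ?_⟩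
      exact (em_mem hA hm Fml.bot).resolve_left (bot_not_mem hA)
  | neg B ih =>
    obtain ⟨ih1, ih2⟩ := ih
    constructor
    · rw [ih2]
      simp only [eval]
      exact (by decide : ∀ e : V3, e ≠ V3.t ↔ negT e ≠ V3.f) _
    · rw [iff_mem hA hm (Hilb.ax11 B), ih1]
      simp only [eval]
      exact (by decide : ∀ e : V3, e ≠ V3.f ↔ negT e ≠ V3.t) _
  | conj B C ihB ihC =>
    obtain ⟨ihB1, ihB2⟩ := ihB
    obtain ⟨ihC1, ihC2⟩ := ihC
    constructor
    · rw [conj_mem hA hm, ihB1, ihC1]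
      simp only [eval]
      exact (by decide : ∀ a b : V3, (a ≠ V3.f ∧ b ≠ V3.f) ↔ conjT a b ≠ V3.f) _ _
    · rw [iff_mem hA hm (Hilb.ax13 B C), disj_mem hA hm, ihB2, ihC2]
      simp only [eval]
      exact (by decide : ∀ a b : V3, (a ≠ V3.t ∨ b ≠ V3.t) ↔ conjT a b ≠ V3.t) _ _
  | disj B C ihB ihC =>
    obtain ⟨ihB1, ihB2⟩ := ihB
    obtain ⟨ihC1, ihC2⟩ := ihC
    constructor
    · rw [disj_mem hA hm, ihB1, ihC1]
      simp only [eval]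
      exact (by decide : ∀ a b : V3, (a ≠ V3.f ∨ b ≠ V3.f) ↔ disjT a b ≠ V3.f) _ _
    · rw [iff_mem hA hm (Hilb.ax14 B C), conj_mem hA hm, ihB2, ihC2]
      simp only [eval]
      exact (by decide : ∀ a b : V3, (a ≠ V3.t ∧ b ≠ V3.t) ↔ disjT a b ≠ V3.t) _ _
  | imp B C ihB ihC =>
    obtain ⟨ihB1, ihB2⟩ := ihB
    obtain ⟨ihC1, ihC2⟩ := ihC
    constructor
    · rw [imp_mem hA hm, ihB1, ihC1]
      simp only [eval]
      exact (by decide : ∀ a b : V3, (¬ a ≠ V3.f ∨ b ≠ V3.f) ↔ impT a b ≠ V3.f) _ _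
    · rw [iff_mem hA hm (Hilb.ax12 B C), conj_mem hA hm, ihB1, ihC2]
      simp only [eval]
      exact (by decide : ∀ a b : V3, (a ≠ V3.f ∧ b ≠ V3.t) ↔ impT a b ≠ V3.t) _ _

/-! ### Completeness -/

theorem complete {Γ : Set (Fml α)} {A : Fml α} (h : SemCons Γ A) : Hilb Γ A := by
  by_contra hΓ
  obtain ⟨Δ, hsub, hA, hm⟩ := lindenbaum hΓ
  have hC : ∀ C ∈ Γ, eval (canon Δ) C ≠ V3.f := fun C hC =>
    (truth hA hm C).1.1 (hsub hC)
  have hAΔ : A ∉ Δ := fun hmem => hA (Hilb.hyp hmem)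
  have : eval (canon Δ) A ≠ V3.f := h (canon Δ) hC
  exact hAΔ ((truth hA hm A).1.2 this)

end LPAux

/-- Strong soundness and completeness of LP→⊥ : Γ ⊢ A iff Γ ⊨ A. -/
theorem LP_strong_soundness_completeness (Γ : Set (Fml ℕ)) (A : Fml ℕ) :
    Hilb Γ A ↔ SemCons Γ A :=
  ⟨LPAux.sound, LPAux.complete⟩
end
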